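/- arXiv:1706.06937 — 6 statements merged into one kernel-verified Lean document; each statement's English description precedes it below -/
import Mathlib

section
/- Let F be the free group with basis {a₁,…,a_m, ā₁,…,ā_m}, let 𝓜(𝒜) be the free monoid on the alphabet {a₁^{±1},…,a_m^{±1}}, and for n ≥ 1 let N_n be the normal closure in F of {[u, ū] : u ∈ 𝓜(𝒜), |u| ≤ n}. Then for all non-empty words α, ε, β ∈ 𝓜(𝒜) with |α| + |ε| + |β| = n+1, the element [βεα, (βεα)‾] lies in N_n if and only if the element [[ᾱ⁻¹, β], ε ε̄⁻¹] lies in N_n. -/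
/-- A word in the free monoid `𝓜(𝒜)` on the alphabet `{a₁^{±1}, …, a_m^{±1}}`:
a list of letters, each a generator index together with a sign (`true` = positive). -/
abbrev MWord (m : ℕ) := List (Fin m × Bool)

/-- The image of a word `w ∈ 𝓜(𝒜)` in the free group `F` on `{a₁,…,a_m,ā₁,…,ā_m}`
(the `ā`'s correspond to the second summand of `Fin m ⊕ Fin m`). -/
def evalWord {m : ℕ} (w : MWord m) : FreeGroup (Fin m ⊕ Fin m) :=
  (w.map fun p =>
    if p.2 then FreeGroup.of (Sum.inl p.1) else (FreeGroup.of (Sum.inl p.1))⁻¹).prod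

/-- The image of the word `w̄` (each `a_i^{±1}` replaced by `ā_i^{±1}`) in `F`. -/
def evalBarWord {m : ℕ} (w : MWord m) : FreeGroup (Fin m ⊕ Fin m) :=
  (w.map fun p =>
    if p.2 then FreeGroup.of (Sum.inr p.1) else (FreeGroup.of (Sum.inr p.1))⁻¹).prod

/-- `□_w = [w, w̄] = w⁻¹ w̄⁻¹ w w̄`, computed in `F`. -/
def sqWord {m : ℕ} (w : MWord m) : FreeGroup (Fin m ⊕ Fin m) :=
  (evalWord w)⁻¹ * (evalBarWord w)⁻¹ * evalWord w * evalBarWord w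

/-- The set `{[u, ū] : u ∈ 𝓜(𝒜), |u| ≤ n}`. -/
def sqSet (m n : ℕ) : Set (FreeGroup (Fin m ⊕ Fin m)) :=
  {x | ∃ u : MWord m, u.length ≤ n ∧ x = sqWord u}


/-- The commutator `[x, y] = x⁻¹ y⁻¹ x y` (the convention of the paper). -/
def pComm {G : Type*} [Group G] (x y : G) : G := x⁻¹ * y⁻¹ * x * y



set_option maxHeartbeats 2000000 in
lemma conj_key {G : Type*} [Group G] (A B E a b e : G)
    (hA : a * A = A * a) (hB : b * B = B * b) (hE : e * E = E * e)
    (hBE : (b * e) * (B * E) = (B * E) * (b * e))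
    (hEA : (e * a) * (E * A) = (E * A) * (e * a))
    (hBA : (b * a) * (B * A) = (B * A) * (b * a)) :
    pComm (B * E * A) (b * e * a) =
      (A⁻¹ * E⁻¹ * a⁻¹ * (a * B⁻¹ * a⁻¹ * B) * (E * e⁻¹)) *
        pComm (pComm a⁻¹ B) (E * e⁻¹) *
      (A⁻¹ * E⁻¹ * a⁻¹ * (a * B⁻¹ * a⁻¹ * B) * (E * e⁻¹))⁻¹ := by
  have hA1 : A⁻¹ * a⁻¹ * A * a = 1 := by
    calc A⁻¹ * a⁻¹ * A * a = A⁻¹ * a⁻¹ * (A * a) := by group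
      _ = A⁻¹ * a⁻¹ * (a * A) := by rw [← hA]
      _ = 1 := by group
  have hB1 : B⁻¹ * b⁻¹ * B * b = 1 := by
    calc B⁻¹ * b⁻¹ * B * b = B⁻¹ * b⁻¹ * (B * b) := by group
      _ = B⁻¹ * b⁻¹ * (b * B) := by rw [← hB]
      _ = 1 := by group
  have hE1 : E⁻¹ * e⁻¹ * E * e = 1 := by
    calc E⁻¹ * e⁻¹ * E * e = E⁻¹ * e⁻¹ * (E * e) := by group
      _ = E⁻¹ * e⁻¹ * (e * E) := by rw [← hE]
      _ = 1 := by group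
  have hBE1 : (B * E)⁻¹ * (b * e)⁻¹ * (B * E) * (b * e) = 1 := by
    calc (B * E)⁻¹ * (b * e)⁻¹ * (B * E) * (b * e)
        = (B * E)⁻¹ * (b * e)⁻¹ * ((B * E) * (b * e)) := by group
      _ = (B * E)⁻¹ * (b * e)⁻¹ * ((b * e) * (B * E)) := by rw [← hBE]
      _ = 1 := by group
  have hEA1 : (E * A)⁻¹ * (e * a)⁻¹ * (E * A) * (e * a) = 1 := by
    calc (E * A)⁻¹ * (e * a)⁻¹ * (E * A) * (e * a)
        = (E * A)⁻¹ * (e * a)⁻¹ * ((E * A) * (e * a)) := by group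
      _ = (E * A)⁻¹ * (e * a)⁻¹ * ((e * a) * (E * A)) := by rw [← hEA]
      _ = 1 := by group
  have hBA1 : (B * A)⁻¹ * (b * a)⁻¹ * (B * A) * (b * a) = 1 := by
    calc (B * A)⁻¹ * (b * a)⁻¹ * (B * A) * (b * a)
        = (B * A)⁻¹ * (b * a)⁻¹ * ((B * A) * (b * a)) := by group
      _ = (B * A)⁻¹ * (b * a)⁻¹ * ((b * a) * (B * A)) := by rw [← hBA]
      _ = 1 := by group
  calc pComm (B * E * A) (b * e * a)
      _ = ((A⁻¹ * E⁻¹ * B⁻¹ * a⁻¹ * B * E * a * A) * (A⁻¹ * a⁻¹ * A * a) * (A⁻¹ * a⁻¹ * E⁻¹ * B⁻¹ * a * B * E * A)) * (A⁻¹ * E⁻¹ * B⁻¹ * a⁻¹ * B * E * a * A * a⁻¹ * A⁻¹ * E⁻¹ * B⁻¹ * e⁻¹ * b⁻¹ * B * E * A * b * e * a) := by simp only [pComm]; group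
      _ = (A⁻¹ * E⁻¹ * B⁻¹ * a⁻¹ * B * E * a * A * a⁻¹ * A⁻¹ * E⁻¹ * B⁻¹ * e⁻¹ * b⁻¹ * B * E * A * b * e * a) := by rw [hA1]; group
      _ = ((A⁻¹ * E⁻¹ * B⁻¹ * a⁻¹ * B * E * a * A * a⁻¹ * A⁻¹) * ((B * E)⁻¹ * (b * e)⁻¹ * (B * E) * (b * e)) * (A * a * A⁻¹ * a⁻¹ * E⁻¹ * B⁻¹ * a * B * E * A)) * (A⁻¹ * E⁻¹ * B⁻¹ * a⁻¹ * B * E * a * A * a⁻¹ * A⁻¹ * e⁻¹ * b⁻¹ * A * b * e * a) := by group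
      _ = (A⁻¹ * E⁻¹ * B⁻¹ * a⁻¹ * B * E * a * A * a⁻¹ * A⁻¹ * e⁻¹ * b⁻¹ * A * b * e * a) := by rw [hBE1]; group
      _ = ((A⁻¹ * E⁻¹ * B⁻¹ * a⁻¹ * B * E * a * A * a⁻¹ * A⁻¹) * (E⁻¹ * e⁻¹ * E * e)⁻¹ * (A * a * A⁻¹ * a⁻¹ * E⁻¹ * B⁻¹ * a * B * E * A)) * (A⁻¹ * E⁻¹ * B⁻¹ * a⁻¹ * B * E * a * A * a⁻¹ * A⁻¹ * E⁻¹ * e⁻¹ * E * b⁻¹ * A * b * e * a) := by group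
      _ = (A⁻¹ * E⁻¹ * B⁻¹ * a⁻¹ * B * E * a * A * a⁻¹ * A⁻¹ * E⁻¹ * e⁻¹ * E * b⁻¹ * A * b * e * a) := by rw [hE1]; group
      _ = ((A⁻¹ * E⁻¹ * B⁻¹ * a⁻¹ * B * E * a * A) * (A⁻¹ * a⁻¹ * A * a)⁻¹ * (A⁻¹ * a⁻¹ * E⁻¹ * B⁻¹ * a * B * E * A)) * (A⁻¹ * E⁻¹ * B⁻¹ * a⁻¹ * B * e⁻¹ * E * b⁻¹ * A * b * e * a) := by group
      _ = (A⁻¹ * E⁻¹ * B⁻¹ * a⁻¹ * B * e⁻¹ * E * b⁻¹ * A * b * e * a) := by rw [hA1]; group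
      _ = ((A⁻¹ * E⁻¹ * B⁻¹ * a⁻¹ * B * a * E * A) * ((E * A)⁻¹ * (e * a)⁻¹ * (E * A) * (e * a)) * (A⁻¹ * E⁻¹ * a⁻¹ * B⁻¹ * a * B * E * A)) * (A⁻¹ * E⁻¹ * B⁻¹ * a⁻¹ * B * a * E * A * a⁻¹ * e⁻¹ * A⁻¹ * b⁻¹ * A * b * e * a) := by group
      _ = (A⁻¹ * E⁻¹ * B⁻¹ * a⁻¹ * B * a * E * A * a⁻¹ * e⁻¹ * A⁻¹ * b⁻¹ * A * b * e * a) := by rw [hEA1]; group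
      _ = ((A⁻¹ * E⁻¹ * B⁻¹ * a⁻¹ * B * a * E * A * a⁻¹ * e⁻¹ * A⁻¹) * (B⁻¹ * b⁻¹ * B * b)⁻¹ * (A * e * a * A⁻¹ * E⁻¹ * a⁻¹ * B⁻¹ * a * B * E * A)) * (A⁻¹ * E⁻¹ * B⁻¹ * a⁻¹ * B * a * E * A * a⁻¹ * e⁻¹ * A⁻¹ * B⁻¹ * b⁻¹ * B * A * b * e * a) := by group
      _ = (A⁻¹ * E⁻¹ * B⁻¹ * a⁻¹ * B * a * E * A * a⁻¹ * e⁻¹ * A⁻¹ * B⁻¹ * b⁻¹ * B * A * b * e * a) := by rw [hB1]; group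
      _ = ((A⁻¹ * E⁻¹ * B⁻¹ * a⁻¹ * B * a * E * A * a⁻¹ * e⁻¹ * a) * (A⁻¹ * a⁻¹ * A * a)⁻¹ * (a⁻¹ * e * a * A⁻¹ * E⁻¹ * a⁻¹ * B⁻¹ * a * B * E * A)) * (A⁻¹ * E⁻¹ * B⁻¹ * a⁻¹ * B * a * E * A * a⁻¹ * e⁻¹ * a * A⁻¹ * a⁻¹ * B⁻¹ * b⁻¹ * B * A * b * e * a) := by group
      _ = (A⁻¹ * E⁻¹ * B⁻¹ * a⁻¹ * B * a * E * A * a⁻¹ * e⁻¹ * a * A⁻¹ * a⁻¹ * B⁻¹ * b⁻¹ * B * A * b * e * a) := by rw [hA1]; group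
      _ = ((A⁻¹ * E⁻¹ * B⁻¹ * a⁻¹ * B * a * E * A * a⁻¹ * e⁻¹ * a * A⁻¹ * a⁻¹ * B⁻¹ * a * B * A) * ((B * A)⁻¹ * (b * a)⁻¹ * (B * A) * (b * a)) * (A⁻¹ * B⁻¹ * a⁻¹ * B * a * A * a⁻¹ * e * a * A⁻¹ * E⁻¹ * a⁻¹ * B⁻¹ * a * B * E * A)) * (A⁻¹ * E⁻¹ * B⁻¹ * a⁻¹ * B * a * E * A * a⁻¹ * e⁻¹ * a * A⁻¹ * a⁻¹ * B⁻¹ * a * B * A * a⁻¹ * e * a) := by group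
      _ = (A⁻¹ * E⁻¹ * B⁻¹ * a⁻¹ * B * a * E * A * a⁻¹ * e⁻¹ * a * A⁻¹ * a⁻¹ * B⁻¹ * a * B * A * a⁻¹ * e * a) := by rw [hBA1]; group
      _ = ((A⁻¹ * E⁻¹ * B⁻¹ * a⁻¹ * B * a * E * A) * (A⁻¹ * a⁻¹ * A * a)⁻¹ * (A⁻¹ * E⁻¹ * a⁻¹ * B⁻¹ * a * B * E * A)) * (A⁻¹ * E⁻¹ * B⁻¹ * a⁻¹ * B * a * E * a⁻¹ * A * e⁻¹ * a * A⁻¹ * a⁻¹ * B⁻¹ * a * B * A * a⁻¹ * e * a) := by group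
      _ = (A⁻¹ * E⁻¹ * B⁻¹ * a⁻¹ * B * a * E * a⁻¹ * A * e⁻¹ * a * A⁻¹ * a⁻¹ * B⁻¹ * a * B * A * a⁻¹ * e * a) := by rw [hA1]; group
      _ = ((A⁻¹ * E⁻¹ * B⁻¹ * a⁻¹ * B * a * E * a⁻¹ * A * e⁻¹ * A⁻¹ * a * A) * (A⁻¹ * a⁻¹ * A * a) * (A⁻¹ * a⁻¹ * A * e * A⁻¹ * a * E⁻¹ * a⁻¹ * B⁻¹ * a * B * E * A)) * (A⁻¹ * E⁻¹ * B⁻¹ * a⁻¹ * B * a * E * a⁻¹ * A * e⁻¹ * A⁻¹ * B⁻¹ * a * B * A * a⁻¹ * e * a) := by group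
      _ = (A⁻¹ * E⁻¹ * B⁻¹ * a⁻¹ * B * a * E * a⁻¹ * A * e⁻¹ * A⁻¹ * B⁻¹ * a * B * A * a⁻¹ * e * a) := by rw [hA1]; group
      _ = ((A⁻¹ * E⁻¹ * B⁻¹ * a⁻¹ * B * a * E * A) * (A⁻¹ * a⁻¹ * A * a) * (A⁻¹ * E⁻¹ * a⁻¹ * B⁻¹ * a * B * E * A)) * (A⁻¹ * E⁻¹ * B⁻¹ * a⁻¹ * B * a * E * A * a⁻¹ * e⁻¹ * A⁻¹ * B⁻¹ * a * B * A * a⁻¹ * e * a) := by group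
      _ = (A⁻¹ * E⁻¹ * B⁻¹ * a⁻¹ * B * a * E * A * a⁻¹ * e⁻¹ * A⁻¹ * B⁻¹ * a * B * A * a⁻¹ * e * a) := by rw [hA1]; group
      _ = ((A⁻¹ * E⁻¹ * B⁻¹ * a⁻¹ * B * a * E * A) * ((E * A)⁻¹ * (e * a)⁻¹ * (E * A) * (e * a))⁻¹ * (A⁻¹ * E⁻¹ * a⁻¹ * B⁻¹ * a * B * E * A)) * (A⁻¹ * E⁻¹ * B⁻¹ * a⁻¹ * B * e⁻¹ * E * B⁻¹ * a * B * A * a⁻¹ * e * a) := by group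
      _ = (A⁻¹ * E⁻¹ * B⁻¹ * a⁻¹ * B * e⁻¹ * E * B⁻¹ * a * B * A * a⁻¹ * e * a) := by rw [hEA1]; group
      _ = ((A⁻¹ * E⁻¹ * B⁻¹ * a⁻¹ * B * e⁻¹ * E * B⁻¹ * a * B * A) * (A⁻¹ * a⁻¹ * A * a)⁻¹ * (A⁻¹ * B⁻¹ * a⁻¹ * B * E⁻¹ * e * B⁻¹ * a * B * E * A)) * (A⁻¹ * E⁻¹ * B⁻¹ * a⁻¹ * B * e⁻¹ * E * B⁻¹ * a * B * a⁻¹ * A * e * a) := by group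
      _ = (A⁻¹ * E⁻¹ * B⁻¹ * a⁻¹ * B * e⁻¹ * E * B⁻¹ * a * B * a⁻¹ * A * e * a) := by rw [hA1]; group
      _ = ((A⁻¹ * E⁻¹ * B⁻¹ * a⁻¹ * B * e⁻¹ * E * B⁻¹ * a * B * a⁻¹ * E⁻¹ * e * a * E * A) * ((E * A)⁻¹ * (e * a)⁻¹ * (E * A) * (e * a)) * (A⁻¹ * E⁻¹ * a⁻¹ * e⁻¹ * E * a * B⁻¹ * a⁻¹ * B * E⁻¹ * e * B⁻¹ * a * B * E * A)) * (A⁻¹ * E⁻¹ * B⁻¹ * a⁻¹ * B * e⁻¹ * E * B⁻¹ * a * B * a⁻¹ * E⁻¹ * e * a * E * A) := by group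
      _ = (A⁻¹ * E⁻¹ * B⁻¹ * a⁻¹ * B * e⁻¹ * E * B⁻¹ * a * B * a⁻¹ * E⁻¹ * e * a * E * A) := by rw [hEA1]; group
      _ = ((A⁻¹ * E⁻¹ * B⁻¹ * a⁻¹ * B * E) * (E⁻¹ * e⁻¹ * E * e) * (E⁻¹ * B⁻¹ * a * B * E * A)) * (A⁻¹ * E⁻¹ * B⁻¹ * a⁻¹ * B * E * e⁻¹ * B⁻¹ * a * B * a⁻¹ * E⁻¹ * e * a * E * A) := by group
      _ = (A⁻¹ * E⁻¹ * B⁻¹ * a⁻¹ * B * E * e⁻¹ * B⁻¹ * a * B * a⁻¹ * E⁻¹ * e * a * E * A) := by rw [hE1]; group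
      _ = ((A⁻¹ * E⁻¹ * B⁻¹ * a⁻¹ * B * E * e⁻¹ * B⁻¹ * a * B * a⁻¹ * E⁻¹ * e * E) * (E⁻¹ * e⁻¹ * E * e)⁻¹ * (E⁻¹ * e⁻¹ * E * a * B⁻¹ * a⁻¹ * B * e * E⁻¹ * B⁻¹ * a * B * E * A)) * (A⁻¹ * E⁻¹ * B⁻¹ * a⁻¹ * B * E * e⁻¹ * B⁻¹ * a * B * a⁻¹ * e * E⁻¹ * a * E * A) := by group
      _ = (A⁻¹ * E⁻¹ * B⁻¹ * a⁻¹ * B * E * e⁻¹ * B⁻¹ * a * B * a⁻¹ * e * E⁻¹ * a * E * A) := by rw [hE1]; group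
      _ = (A⁻¹ * E⁻¹ * a⁻¹ * (a * B⁻¹ * a⁻¹ * B) * (E * e⁻¹)) * pComm (pComm a⁻¹ B) (E * e⁻¹) * (A⁻¹ * E⁻¹ * a⁻¹ * (a * B⁻¹ * a⁻¹ * B) * (E * e⁻¹))⁻¹ := by simp only [pComm]; group
lemma evalWord_append {m : ℕ} (u v : MWord m) :
    evalWord (u ++ v) = evalWord u * evalWord v := by
  simp [evalWord, List.map_append, List.prod_append]

lemma evalBarWord_append {m : ℕ} (u v : MWord m) :
    evalBarWord (u ++ v) = evalBarWord u * evalBarWord v := by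
  simp [evalBarWord, List.map_append, List.prod_append]

lemma comm_of_eq_one {G : Type*} [Group G] {x y : G}
    (h : x⁻¹ * y⁻¹ * x * y = 1) : y * x = x * y := by
  have h2 : x * y = y * x * (x⁻¹ * y⁻¹ * x * y) := by group
  rw [h, mul_one] at h2
  exact h2.symm

/-- **Lemma 1.2.** For non-empty words `α, ε, β ∈ 𝓜(𝒜)` with `|α| + |ε| + |β| = n + 1`,
`□_{βεα} = 1 mod □((n))` if and only if `[[ᾱ⁻¹, β], ε ε̄⁻¹] = 1 mod □((n))`. -/
theorem sq_iff_comm_mem_normalClosure (m n : ℕ) (hn : 1 ≤ n) (α ε β : MWord m)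
    (hα : α ≠ []) (hε : ε ≠ []) (hβ : β ≠ [])
    (hlen : α.length + ε.length + β.length = n + 1) :
    sqWord (β ++ ε ++ α) ∈ Subgroup.normalClosure (sqSet m n) ↔
      pComm (pComm (evalBarWord α)⁻¹ (evalWord β)) (evalWord ε * (evalBarWord ε)⁻¹) ∈
        Subgroup.normalClosure (sqSet m n) := by
  have hα1 : 1 ≤ α.length := List.length_pos_iff.mpr hα
  have hε1 : 1 ≤ ε.length := List.length_pos_iff.mpr hε
  have hβ1 : 1 ≤ β.length := List.length_pos_iff.mpr hβ
  set N := Subgroup.normalClosure (sqSet m n) with hN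
  have : N.Normal := Subgroup.normalClosure_normal
  -- work in the quotient
  let π : FreeGroup (Fin m ⊕ Fin m) →* FreeGroup (Fin m ⊕ Fin m) ⧸ N :=
    QuotientGroup.mk' N
  have hπ : ∀ x, π x = 1 ↔ x ∈ N := fun x => QuotientGroup.eq_one_iff x
  have hmem : ∀ u : MWord m, u.length ≤ n →
      π (evalBarWord u) * π (evalWord u) = π (evalWord u) * π (evalBarWord u) := by
    intro u hu
    apply comm_of_eq_one
    have h1 : π (sqWord u) = 1 :=
      (hπ _).mpr (Subgroup.subset_normalClosure ⟨u, hu, rfl⟩)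
    simpa [sqWord, map_mul, map_inv] using h1
  set A := π (evalWord α) with hA'
  set B := π (evalWord β) with hB'
  set E := π (evalWord ε) with hE'
  set a := π (evalBarWord α) with ha'
  set b := π (evalBarWord β) with hb'
  set e := π (evalBarWord ε) with he'
  have hA : a * A = A * a := hmem α (by omega)
  have hB : b * B = B * b := hmem β (by omega)
  have hE : e * E = E * e := hmem ε (by omega)
  have hBE : (b * e) * (B * E) = (B * E) * (b * e) := by
    have := hmem (β ++ ε) (by simp only [List.length_append]; omega)
    simpa [evalWord_append, evalBarWord_append, map_mul] using this
  have hEA : (e * a) * (E * A) = (E * A) * (e * a) := by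
    have := hmem (ε ++ α) (by simp only [List.length_append]; omega)
    simpa [evalWord_append, evalBarWord_append, map_mul] using this
  have hBA : (b * a) * (B * A) = (B * A) * (b * a) := by
    have := hmem (β ++ α) (by simp only [List.length_append]; omega)
    simpa [evalWord_append, evalBarWord_append, map_mul] using this
  have key := conj_key A B E a b e hA hB hE hBE hEA hBA
  set g : FreeGroup (Fin m ⊕ Fin m) ⧸ N :=
    A⁻¹ * E⁻¹ * a⁻¹ * (a * B⁻¹ * a⁻¹ * B) * (E * e⁻¹) with hg
  have hLHS : π (sqWord (β ++ ε ++ α)) = pComm (B * E * A) (b * e * a) := by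
    simp [sqWord, pComm, evalWord_append, evalBarWord_append, map_mul, map_inv,
      hA', hB', hE', ha', hb', he', mul_assoc]
  have hRHS : π (pComm (pComm (evalBarWord α)⁻¹ (evalWord β))
      (evalWord ε * (evalBarWord ε)⁻¹)) = pComm (pComm a⁻¹ B) (E * e⁻¹) := by
    simp [pComm, map_mul, map_inv, hA', hB', hE', ha', hb', he']
  rw [← hπ, ← hπ, hLHS, hRHS, key]
  constructor
  · intro h
    have h2 : pComm (pComm a⁻¹ B) (E * e⁻¹) =
        g⁻¹ * (g * pComm (pComm a⁻¹ B) (E * e⁻¹) * g⁻¹) * g := by group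
    rw [h] at h2
    rw [h2]; group
  · intro h
    rw [h]; group
end

section
/- Let Γ be a group and let C be a central subgroup of Γ. If the quotient group Γ/C is finitely generated and the abelianization Γ/[Γ,Γ] is finitely generated, then Γ is finitely generated. -/
open scoped commutatorElement
lemma commutatorElement_mul_central {G : Type*} [Group G] {c c' : G} (h h' : G)
    (hc : c ∈ Subgroup.center G) (hc' : c' ∈ Subgroup.center G) :
    ⁅h * c, h' * c'⁆ = ⁅h, h'⁆ := by
  rw [Subgroup.mem_center_iff] at hc hc'
  have key : ∀ x : G, h * c * x * (h * c)⁻¹ = h * x * h⁻¹ := by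
    intro x
    rw [mul_inv_rev]
    calc h * c * x * (c⁻¹ * h⁻¹) = h * (c * x * c⁻¹) * h⁻¹ := by group
      _ = h * x * h⁻¹ := by rw [← hc x, mul_inv_cancel_right]
  rw [commutatorElement_def, key]
  calc h * (h' * c') * h⁻¹ * (h' * c')⁻¹
      = h * h' * (c' * h⁻¹) * (c'⁻¹ * h'⁻¹) := by group
    _ = h * h' * (h⁻¹ * c') * (c'⁻¹ * h'⁻¹) := by rw [← hc' h⁻¹]
    _ = ⁅h, h'⁆ := by rw [commutatorElement_def]; group

lemma closure_section_sup_ker {G : Type*} [Group G] (N : Subgroup G) [N.Normal]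
    (SQ : Set (G ⧸ N)) (hclo : Subgroup.closure SQ = ⊤) :
    Subgroup.closure (Quotient.out '' SQ) ⊔ N = ⊤ := by
  have hmap : Subgroup.map (QuotientGroup.mk' N) (Subgroup.closure (Quotient.out '' SQ)) = ⊤ := by
    rw [MonoidHom.map_closure, ← Set.image_comp]
    have : (QuotientGroup.mk' N ∘ Quotient.out) '' SQ = SQ := by
      have : ∀ q ∈ SQ, (QuotientGroup.mk' N ∘ Quotient.out) q = q := fun q _ => q.out_eq'
      rw [Set.image_congr this]; exact Set.image_id SQ
    rw [this, hclo]
  have := congrArg (Subgroup.comap (QuotientGroup.mk' N)) hmap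
  rwa [Subgroup.comap_map_eq, QuotientGroup.ker_mk', Subgroup.comap_top] at this

open Pointwise

/-- **Lemma 2.3.** If `C` is a central subgroup of `Γ` such that `Γ/C` and the
abelianization `Γ/[Γ,Γ]` are finitely generated, then `Γ` is finitely generated. -/
theorem fg_of_central_quotient_fg (Γ : Type*) [Group Γ] (C : Subgroup Γ)
    (hC : C ≤ Subgroup.center Γ) [C.Normal]
    (hQ : Group.FG (Γ ⧸ C)) (hAb : Group.FG (Abelianization Γ)) :
    Group.FG Γ := by
  obtain ⟨SQ, hSQclo, hSQfin⟩ := Group.fg_iff.mp hQ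
  obtain ⟨SA, hSAclo, hSAfin⟩ := Group.fg_iff.mp hAb
  set S : Set Γ := Quotient.out '' SQ with hS
  set T : Set Γ := Quotient.out '' SA with hT
  have hsupS : Subgroup.closure S ⊔ C = ⊤ := closure_section_sup_ker C SQ hSQclo
  -- the commutator subgroup is contained in closure S
  have hcomm : commutator Γ ≤ Subgroup.closure S := by
    rw [commutator_def, Subgroup.commutator_le]
    intro g₁ _ g₂ _
    have hg₁ : g₁ ∈ (Subgroup.closure S : Set Γ) * (C : Set Γ) := by
      rw [← Subgroup.mul_normal, hsupS]; exact Subgroup.mem_top g₁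
    have hg₂ : g₂ ∈ (Subgroup.closure S : Set Γ) * (C : Set Γ) := by
      rw [← Subgroup.mul_normal, hsupS]; exact Subgroup.mem_top g₂
    obtain ⟨h₁, hh₁, c₁, hc₁, rfl⟩ := hg₁
    obtain ⟨h₂, hh₂, c₂, hc₂, rfl⟩ := hg₂
    rw [commutatorElement_mul_central h₁ h₂ (hC hc₁) (hC hc₂), commutatorElement_def]
    exact Subgroup.mul_mem _ (Subgroup.mul_mem _ (Subgroup.mul_mem _ hh₁ hh₂)
      (Subgroup.inv_mem _ hh₁)) (Subgroup.inv_mem _ hh₂)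
  -- closure T together with the commutator subgroup is everything
  have hsupT : Subgroup.closure T ⊔ commutator Γ = ⊤ :=
    closure_section_sup_ker (commutator Γ) SA hSAclo
  refine Group.fg_iff.mpr ⟨S ∪ T, ?_, (hSQfin.image _).union (hSAfin.image _)⟩
  rw [Subgroup.closure_union, eq_top_iff, ← hsupT]
  exact sup_le le_sup_right (hcomm.trans le_sup_left)
end

section
/- Let G be a finitely generated group. Then the subgroup L(G) of 𝔛(G) is finitely generated. -/
open Monoid

def weakCommRel (G : Type*) [Group G] : Set (Monoid.Coprod G G) :=
  {x | ∃ g : G, x = (Coprod.inl g)⁻¹ * (Coprod.inr g)⁻¹ * Coprod.inl g * Coprod.inr g}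

def SidkiX (G : Type*) [Group G] : Type _ :=
  Monoid.Coprod G G ⧸ Subgroup.normalClosure (weakCommRel G)

instance (G : Type*) [Group G] : Group (SidkiX G) :=
  inferInstanceAs (Group (Monoid.Coprod G G ⧸ Subgroup.normalClosure (weakCommRel G)))

/-- The canonical projection `G ∗ Ḡ → 𝔛(G)`. -/
def SidkiX.mk (G : Type*) [Group G] : Monoid.Coprod G G →* SidkiX G :=
  QuotientGroup.mk' (Subgroup.normalClosure (weakCommRel G))

/-- The homomorphism `𝔛(G) → G` sending both `g` and `ḡ` to `g`. -/
def SidkiX.proj (G : Type*) [Group G] : SidkiX G →* G :=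
  QuotientGroup.lift _ (Coprod.lift (MonoidHom.id G) (MonoidHom.id G)) (by
    intro x hx
    refine Subgroup.normalClosure_le_normal ?_ hx
    rintro _ ⟨g, rfl⟩
    simp [MonoidHom.mem_ker, Coprod.lift_apply_inl, Coprod.lift_apply_inr, mul_assoc])

/-- The normal subgroup `L(G) = ker(𝔛(G) → G)`. -/
def SidkiL (G : Type*) [Group G] : Subgroup (SidkiX G) :=
  (SidkiX.proj G).ker

namespace SidkiAux

variable {G : Type*} [Group G]

/-- `G → 𝔛(G)`, left copy. -/
def il : G →* SidkiX G := (SidkiX.mk G).comp Coprod.inl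

/-- `G → 𝔛(G)`, right copy. -/
def ir : G →* SidkiX G := (SidkiX.mk G).comp Coprod.inr

/-- `d(g) = g⁻¹ ḡ`. -/
def dd (g : G) : SidkiX G := (il g)⁻¹ * ir g

lemma il_ir_comm (g : G) : il g * ir g = ir g * il g := by
  have h : SidkiX.mk G ((Coprod.inl g)⁻¹ * (Coprod.inr g)⁻¹ * Coprod.inl g * Coprod.inr g)
      = 1 := by
    exact (QuotientGroup.eq_one_iff _).mpr (Subgroup.subset_normalClosure ⟨g, rfl⟩)
  have h2 : (il g)⁻¹ * (ir g)⁻¹ * il g * ir g = 1 := by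
    simpa [il, ir, map_mul, map_inv] using h
  have := mul_left_cancel (a := ir g * il g)
    (b := (il g)⁻¹ * (ir g)⁻¹ * il g * ir g) (c := 1) ?_
  · calc il g * ir g = ir g * il g * ((il g)⁻¹ * (ir g)⁻¹ * il g * ir g) := by group
    _ = ir g * il g * 1 := by rw [h2]
    _ = ir g * il g := by group
  · rw [h2]

lemma proj_il (g : G) : SidkiX.proj G (il g) = g := rfl

lemma proj_ir (g : G) : SidkiX.proj G (ir g) = g := rfl

lemma dd_mem_L (g : G) : dd g ∈ SidkiL G := by
  simp [SidkiL, MonoidHom.mem_ker, dd, proj_il, proj_ir]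

lemma il_dd_comm (g : G) : il g * dd g = dd g * il g := by
  rw [dd]
  calc il g * ((il g)⁻¹ * ir g) = ir g := by group
  _ = (il g)⁻¹ * (il g * ir g) := by group
  _ = (il g)⁻¹ * (ir g * il g) := by rw [il_ir_comm]
  _ = (il g)⁻¹ * ir g * il g := by group

lemma commute_il_dd (g : G) : Commute (il g) (dd g) := il_dd_comm g

lemma cocycle (g h : G) : dd (g * h) = (il h)⁻¹ * dd g * il h * dd h := by
  simp only [dd, map_mul]
  group

lemma conj_il_dd (g c : G) : (il c)⁻¹ * dd g * il c = dd (g * c) * (dd c)⁻¹ := by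
  rw [cocycle g c]; group

lemma dd_one : dd (1 : G) = 1 := by simp [dd]

lemma dd_inv (g : G) : dd g⁻¹ = (dd g)⁻¹ := by
  have h : dd (g * g⁻¹) = 1 := by rw [mul_inv_cancel]; exact dd_one
  rw [cocycle g g⁻¹] at h
  have hc : (il g⁻¹)⁻¹ * dd g * il g⁻¹ = dd g := by
    rw [map_inv]
    have := (commute_il_dd g).inv_left.eq
    calc (il g)⁻¹⁻¹ * dd g * (il g)⁻¹ = il g * dd g * (il g)⁻¹ := by group
    _ = dd g * il g * (il g)⁻¹ := by rw [il_dd_comm]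
    _ = dd g := by group
  rw [hc] at h
  exact eq_inv_of_mul_eq_one_right h

lemma dd_sq (g : G) : dd (g * g) = dd g * dd g := by
  rw [cocycle g g]
  have hc : (il g)⁻¹ * dd g * il g = dd g := by
    calc (il g)⁻¹ * dd g * il g = (il g)⁻¹ * (dd g * il g) := by group
    _ = (il g)⁻¹ * (il g * dd g) := by rw [← il_dd_comm]
    _ = dd g := by group
  rw [hc]

/-- Key identity (C): `d(ghg) = d(g) d(h) d(g)`. -/
lemma dd_conj (g h : G) : dd (g * h * g) = dd g * dd h * dd g := by
  have e1 : dd ((g * h * g) * h) = dd ((g*h) * (g*h)) := by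
    have : (g * h * g) * h = (g*h) * (g*h) := by group
    rw [this]
  have h1 : dd ((g*h) * (g*h)) = dd (g*h) * dd (g*h) := dd_sq (g*h)
  have h2 : dd ((g * h * g) * h) = (il h)⁻¹ * dd (g*h*g) * il h * dd h := cocycle _ _
  have key : (il h)⁻¹ * dd (g*h*g) * il h = dd (g*h) * dd (g*h) * (dd h)⁻¹ := by
    have := h2.symm.trans (e1.trans h1)
    calc (il h)⁻¹ * dd (g*h*g) * il h
        = ((il h)⁻¹ * dd (g*h*g) * il h * dd h) * (dd h)⁻¹ := by group
    _ = (dd (g*h) * dd (g*h)) * (dd h)⁻¹ := by rw [this]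
  have hX : dd (g*h*g) = il h * (dd (g*h) * dd (g*h) * (dd h)⁻¹) * (il h)⁻¹ := by
    rw [← key]; group
  have h3 : il h * dd (g*h) * (il h)⁻¹ = dd g * dd h := by
    have := conj_il_dd (g*h) h⁻¹
    rw [map_inv, inv_inv] at this
    rw [this]
    have e : (g * h) * h⁻¹ = g := by group
    rw [e, dd_inv, inv_inv]
  have h4 : il h * (dd h)⁻¹ * (il h)⁻¹ = (dd h)⁻¹ := by
    have := (commute_il_dd h).inv_right.eq
    rw [this]; group
  calc dd (g*h*g) = (il h * dd (g*h) * (il h)⁻¹) * (il h * dd (g*h) * (il h)⁻¹)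
        * (il h * (dd h)⁻¹ * (il h)⁻¹) := by rw [hX]; group
  _ = (dd g * dd h) * (dd g * dd h) * (dd h)⁻¹ := by rw [h3, h4]
  _ = dd g * dd h * dd g := by group

/-- Split rule: `d(gh) = d(g) · (g d(h) g⁻¹)`. -/
lemma dd_split (g h : G) : dd (g * h) = dd g * (il g * dd h * (il g)⁻¹) := by
  have h1 : il g * dd h * (il g)⁻¹ = dd (h * g⁻¹) * dd g := by
    have := conj_il_dd h g⁻¹
    rw [map_inv, inv_inv] at this
    rw [this, dd_inv, inv_inv]
  rw [h1]
  have h2 : dd (g * (h * g⁻¹) * g) = dd g * dd (h * g⁻¹) * dd g := dd_conj g (h * g⁻¹)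
  have e : g * (h * g⁻¹) * g = g * h := by group
  rw [e] at h2
  rw [h2]; group

/-- `d(htt)` expansion. -/
lemma dd_htt (h t : G) :
    dd (h * t * t) =
      dd t * (dd (h*t) * (dd t)⁻¹ * (dd h)⁻¹ * (dd t)⁻¹ * dd (h*t)) * dd t := by
  have h1 : dd (t * (t⁻¹ * h * t) * t) = dd t * dd (t⁻¹ * h * t) * dd t :=
    dd_conj t (t⁻¹ * h * t)
  have e : t * (t⁻¹ * h * t) * t = h * t * t := by group
  rw [e] at h1
  have h2 : dd (t⁻¹ * h * t)
      = dd (h*t) * (dd t)⁻¹ * (dd h)⁻¹ * (dd t)⁻¹ * dd (h*t) := by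
    have c1 : dd (t⁻¹ * (h * t)) = (il (h*t))⁻¹ * dd t⁻¹ * il (h*t) * dd (h*t) :=
      cocycle t⁻¹ (h*t)
    have c2 : (il (h*t))⁻¹ * dd t * il (h*t) = dd (t * (h*t)) * (dd (h*t))⁻¹ :=
      conj_il_dd t (h*t)
    have c3 : dd (t * (h * t)) = dd t * dd h * dd t := by
      have := dd_conj t h
      have e2 : t * (h * t) = t * h * t := by group
      rw [e2]; exact this
    have c4 : (il (h*t))⁻¹ * dd t⁻¹ * il (h*t)
        = ((il (h*t))⁻¹ * dd t * il (h*t))⁻¹ := by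
      rw [dd_inv]; group
    have e3 : t⁻¹ * (h * t) = t⁻¹ * h * t := by group
    rw [e3] at c1
    rw [c1, c4, c2, c3]
    group
  rw [h2] at h1
  exact h1

/-- Right rotation: `d(ht) = d(t) d(t⁻¹h) d(t)`. -/
lemma dd_rrot (h t : G) : dd (h * t) = dd t * dd (t⁻¹ * h) * dd t := by
  have h1 : dd (t⁻¹ * (h⁻¹ * t) * t⁻¹) = dd t⁻¹ * dd (h⁻¹ * t) * dd t⁻¹ :=
    dd_conj t⁻¹ (h⁻¹ * t)
  have e : t⁻¹ * (h⁻¹ * t) * t⁻¹ = (h * t)⁻¹ := by group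
  rw [e, dd_inv, dd_inv] at h1
  have h2 : dd (h * t) = ((dd t)⁻¹ * dd (h⁻¹*t) * (dd t)⁻¹)⁻¹ := by
    rw [← h1]; group
  rw [h2]
  have e2 : dd (h⁻¹ * t) = (dd (t⁻¹ * h))⁻¹ := by
    rw [← dd_inv]
    congr 1
    group
  rw [e2]
  group

section Words

variable (S : Finset G)

/-- Letters: a generator together with a sign. -/
abbrev Letter := {x // x ∈ S} × Bool

variable {S}

/-- Evaluation of a letter in `G`. -/
def evA (a : Letter S) : G := if a.2 then (a.1 : G) else (a.1 : G)⁻¹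

/-- Evaluation of a word in `G`. -/
def pw (w : List (Letter S)) : G := (w.map evA).prod

/-- Inverse of a letter. -/
def flipL (a : Letter S) : Letter S := (a.1, !a.2)

lemma evA_flip (a : Letter S) : evA (flipL a) = (evA a)⁻¹ := by
  obtain ⟨x, b⟩ := a
  cases b <;> simp [evA, flipL]

lemma flipL_fst (a : Letter S) : (flipL a).1 = a.1 := rfl

/-- Inverse of a word. -/
def wInv (w : List (Letter S)) : List (Letter S) := (w.map flipL).reverse

lemma pw_nil : pw ([] : List (Letter S)) = 1 := rfl

lemma pw_cons (a : Letter S) (w : List (Letter S)) : pw (a :: w) = evA a * pw w := by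
  simp [pw]

lemma pw_append (u v : List (Letter S)) : pw (u ++ v) = pw u * pw v := by
  simp [pw]

lemma pw_singleton (a : Letter S) : pw [a] = evA a := by simp [pw]

lemma wInv_length (w : List (Letter S)) : (wInv w).length = w.length := by
  simp [wInv]

lemma wInv_append_singleton (a : Letter S) (w : List (Letter S)) :
    wInv (a :: w) = wInv w ++ [flipL a] := by
  simp [wInv]

lemma pw_wInv (w : List (Letter S)) : pw (wInv w) = (pw w)⁻¹ := by
  induction w with
  | nil => simp [wInv, pw_nil]
  | cons a w ih =>
      rw [wInv_append_singleton, pw_append, pw_singleton, pw_cons, ih, evA_flip]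
      group

/-- The subgroup generated by `d` of products of at most `j` letters. -/
def Mj (j : ℕ) : Subgroup (SidkiX G) :=
  Subgroup.closure {x | ∃ w : List (Letter S), w.length ≤ j ∧ x = dd (pw w)}

lemma Mj_mono {j k : ℕ} (h : j ≤ k) : (Mj (S := S) j) ≤ Mj (S := S) k :=
  Subgroup.closure_mono (fun x ⟨w, hw, e⟩ => ⟨w, hw.trans h, e⟩)

lemma dd_mem_Mj {w : List (Letter S)} {j : ℕ} (h : w.length ≤ j) :
    dd (pw w) ∈ Mj (S := S) j :=
  Subgroup.subset_closure ⟨w, h, rfl⟩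

lemma conj_letter_mem {j : ℕ} (t : Letter S) {x : SidkiX G} (hx : x ∈ Mj (S := S) j) :
    (il (evA t))⁻¹ * x * il (evA t) ∈ Mj (S := S) (j + 1) := by
  induction hx using Subgroup.closure_induction with
  | mem y hy =>
      obtain ⟨w, hw, rfl⟩ := hy
      rw [conj_il_dd]
      have h1 : dd (pw w * evA t) = dd (pw (w ++ [t])) := by
        rw [pw_append, pw_singleton]
      have h2 : dd (evA t) = dd (pw [t]) := by rw [pw_singleton]
      rw [h1, h2]
      refine mul_mem (dd_mem_Mj ?_) (inv_mem (dd_mem_Mj ?_)) <;> simp <;> omega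
  | one =>
      have : (il (evA t))⁻¹ * 1 * il (evA t) = 1 := by group
      rw [this]; exact one_mem _
  | mul y z hy hz ihy ihz =>
      have : (il (evA t))⁻¹ * (y * z) * il (evA t)
          = ((il (evA t))⁻¹ * y * il (evA t)) * ((il (evA t))⁻¹ * z * il (evA t)) := by
        group
      rw [this]; exact mul_mem ihy ihz
  | inv y hy ihy =>
      have : (il (evA t))⁻¹ * y⁻¹ * il (evA t)
          = ((il (evA t))⁻¹ * y * il (evA t))⁻¹ := by group
      rw [this]; exact inv_mem ihy

lemma conj_word_mem : ∀ (c : List (Letter S)) {j : ℕ} {x : SidkiX G},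
    x ∈ Mj (S := S) j → (il (pw c))⁻¹ * x * il (pw c) ∈ Mj (S := S) (j + c.length) := by
  intro c
  induction c with
  | nil =>
      intro j x hx
      simpa [pw_nil] using hx
  | cons a c ih =>
      intro j x hx
      have e : (il (pw (a :: c)))⁻¹ * x * il (pw (a :: c))
          = (il (pw c))⁻¹ * ((il (evA a))⁻¹ * x * il (evA a)) * il (pw c) := by
        rw [pw_cons, map_mul]; group
      rw [e]
      have := ih (conj_letter_mem a hx)
      have harith : j + 1 + c.length = j + (a :: c).length := by
        simp; omega
      rwa [harith] at this

lemma conj_word_mem' (c : List (Letter S)) {j : ℕ} {x : SidkiX G}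
    (hx : x ∈ Mj (S := S) j) :
    il (pw c) * x * (il (pw c))⁻¹ ∈ Mj (S := S) (j + c.length) := by
  have := conj_word_mem (wInv c) hx
  rw [pw_wInv, map_inv, inv_inv, wInv_length] at this
  exact this

lemma letter_cases (a b : Letter S) (h : a.1 = b.1) :
    evA b = evA a ∨ evA b = (evA a)⁻¹ := by
  obtain ⟨x, sa⟩ := a
  obtain ⟨y, sb⟩ := b
  simp only at h
  subst h
  cases sa <;> cases sb <;> simp [evA]

/-- **Reduction lemma**: if a word contains a repeated base letter, then `d` of it lies in the
subgroup generated by `d`'s of strictly shorter words. -/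
lemma lemR : ∀ (m : ℕ) (U V W : List (Letter S)) (a b : Letter S), a.1 = b.1 →
    (U ++ a :: (V ++ b :: W)).length = m →
    dd (pw (U ++ a :: (V ++ b :: W))) ∈ Mj (S := S) (m - 1) := by
  intro m
  induction m using Nat.strong_induction_on with
  | _ m IH =>
  intro U V W a b hab hlen
  simp only [List.length_append, List.length_cons] at hlen
  match U with
  | (u :: U') =>
      set U := u :: U' with hU
      have hUlen : 1 ≤ U.length := by simp [hU]
      set R := a :: (V ++ b :: W) with hR
      have hRlen : R.length = V.length + W.length + 2 := by
        simp only [hR, List.length_cons, List.length_append]; omega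
      have hU'len : U.length = U'.length + 1 := by simp [hU]
      have hmlen : U.length + R.length = m := by omega
      have hsplit : dd (pw (U ++ R))
          = dd (pw U) * (il (pw U) * dd (pw R) * (il (pw U))⁻¹) := by
        rw [pw_append]; exact dd_split _ _
      rw [hsplit]
      have hIH : dd (pw R) ∈ Mj (S := S) (R.length - 1) := by
        have hlt : R.length < m := by omega
        have := IH R.length hlt [] V W a b hab (by simp [hR])
        simpa [hR] using this
      have hconj : il (pw U) * dd (pw R) * (il (pw U))⁻¹
          ∈ Mj (S := S) (R.length - 1 + U.length) := conj_word_mem' U hIH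
      have harith : R.length - 1 + U.length = m - 1 := by omega
      rw [harith] at hconj
      exact mul_mem (dd_mem_Mj (by omega)) hconj
  | ([]) =>
  match V, W with
  | [], W =>
      have hm : W.length + 2 = m := by simpa using hlen
      rcases letter_cases a b hab with hbx | hbx
      · -- adjacent same sign at the front: inversion + htt
        have hpw : pw ([] ++ a :: ([] ++ b :: W)) = evA a * (evA a * pw W) := by
          simp [pw_cons, hbx]
        have hinv : (pw ([] ++ a :: ([] ++ b :: W)))⁻¹
            = pw (wInv W ++ [flipL a]) * evA (flipL a) := by
          rw [hpw, pw_append, pw_singleton, pw_wInv, evA_flip]; group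
        have hdd : dd (pw ([] ++ a :: ([] ++ b :: W)))
            = (dd (pw (wInv W ++ [flipL a]) * evA (flipL a)))⁻¹ := by
          rw [← hinv, ← dd_inv]
          congr 1
          group
        rw [hdd]
        have hhtt := dd_htt (pw (wInv W)) (evA (flipL a))
        have e1 : pw (wInv W) * evA (flipL a) = pw (wInv W ++ [flipL a]) := by
          rw [pw_append, pw_singleton]
        rw [e1] at hhtt
        rw [hhtt]
        have m1 : dd (evA (flipL a)) ∈ Mj (S := S) (m - 1) := by
          have : dd (evA (flipL a)) = dd (pw [flipL a]) := by rw [pw_singleton]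
          rw [this]; exact dd_mem_Mj (by simp; omega)
        have m2 : dd (pw (wInv W)) ∈ Mj (S := S) (m - 1) :=
          dd_mem_Mj (by rw [wInv_length]; omega)
        have m3 : dd (pw (wInv W ++ [flipL a])) ∈ Mj (S := S) (m - 1) :=
          dd_mem_Mj (by simp [wInv_length]; omega)
        exact inv_mem (mul_mem (mul_mem m1
          (mul_mem (mul_mem (mul_mem (mul_mem m3 (inv_mem m1)) (inv_mem m2))
            (inv_mem m1)) m3)) m1)
      · -- adjacent opposite signs: cancellation
        have hpw : pw ([] ++ a :: ([] ++ b :: W)) = pw W := by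
          simp [pw_cons, hbx]
        rw [hpw]
        exact dd_mem_Mj (by omega)
  | (v :: V'), [] =>
      set V := v :: V' with hV
      have hVlen : V.length = V'.length + 1 := by simp [hV]
      have hm : V.length + 2 = m := by simp only [List.length_nil] at hlen; omega
      rcases letter_cases a b hab with hbx | hbx
      · -- palindrome: dd_conj
        have hpw : pw ([] ++ a :: (V ++ b :: [])) = evA a * pw V * evA a := by
          simp [pw_cons, pw_append, pw_singleton, pw_nil, hbx, mul_assoc]
        rw [hpw, dd_conj]
        have m1 : dd (evA a) ∈ Mj (S := S) (m - 1) := by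
          have : dd (evA a) = dd (pw [a]) := by rw [pw_singleton]
          rw [this]; exact dd_mem_Mj (by simp; omega)
        have m2 : dd (pw V) ∈ Mj (S := S) (m - 1) := dd_mem_Mj (by omega)
        exact mul_mem (mul_mem m1 m2) m1
      · -- ends with inverse of first letter: split + htt
        have hpw : pw ([] ++ a :: (V ++ b :: []))
            = evA a * (pw V * (evA a)⁻¹) := by
          simp [pw_cons, pw_append, pw_singleton, pw_nil, hbx, mul_assoc]
        rw [hpw, dd_split]
        have hconj : il (evA a) * dd (pw V * (evA a)⁻¹) * (il (evA a))⁻¹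
            = dd (pw V * (evA a)⁻¹ * (evA a)⁻¹) * (dd ((evA a)⁻¹))⁻¹ := by
          have := conj_il_dd (pw V * (evA a)⁻¹) ((evA a)⁻¹)
          rw [map_inv, inv_inv] at this
          exact this
        rw [hconj, dd_htt (pw V) ((evA a)⁻¹)]
        have e1 : pw V * (evA a)⁻¹ = pw (V ++ [b]) := by
          rw [pw_append, pw_singleton, hbx]
        have e2 : dd ((evA a)⁻¹) = dd (pw [b]) := by rw [pw_singleton, hbx]
        rw [e1, e2]
        have m1 : dd (pw [b]) ∈ Mj (S := S) (m - 1) :=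
          dd_mem_Mj (by simp; omega)
        have m2 : dd (pw V) ∈ Mj (S := S) (m - 1) := dd_mem_Mj (by omega)
        have m3 : dd (pw (V ++ [b])) ∈ Mj (S := S) (m - 1) :=
          dd_mem_Mj (by simp; omega)
        have m0 : dd (evA a) ∈ Mj (S := S) (m - 1) := by
          have : dd (evA a) = dd (pw [a]) := by rw [pw_singleton]
          rw [this]; exact dd_mem_Mj (by simp; omega)
        exact mul_mem m0 (mul_mem (mul_mem (mul_mem m1
          (mul_mem (mul_mem (mul_mem (mul_mem m3 (inv_mem m1)) (inv_mem m2))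
            (inv_mem m1)) m3)) m1) (inv_mem m1))
  | (v :: V'), (w₀ :: W') =>
      -- rotation case (sign-independent)
      set V := v :: V' with hV
      set W := w₀ :: W' with hW
      have hVlen : V.length = V'.length + 1 := by simp [hV]
      have hWlen : W.length = W'.length + 1 := by simp [hW]
      have hm : V.length + W.length + 2 = m := by
        simp only [List.length_nil] at hlen; omega
      set R' : List (Letter S) := b :: (W ++ [flipL a]) with hR'
      have hR'len : R'.length = W.length + 2 := by
        simp only [hR', List.length_cons, List.length_append, List.length_singleton]; omega
      have hpw : pw ([] ++ a :: (V ++ b :: W))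
          = evA a * pw (V ++ R') * evA a := by
        simp only [List.nil_append, pw_cons, pw_append, hR', pw_singleton, pw_nil,
          evA_flip, List.append_nil]
        group
      rw [hpw, dd_conj]
      have hIH : dd (pw R') ∈ Mj (S := S) (R'.length - 1) := by
        have hlt : R'.length < m := by omega
        have := IH R'.length hlt [] W [] b (flipL a)
          (by rw [flipL_fst, hab]) (by simp [hR'])
        simpa [hR'] using this
      have hsplit : dd (pw (V ++ R'))
          = dd (pw V) * (il (pw V) * dd (pw R') * (il (pw V))⁻¹) := by
        rw [pw_append]; exact dd_split _ _
      have hconj : il (pw V) * dd (pw R') * (il (pw V))⁻¹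
          ∈ Mj (S := S) (R'.length - 1 + V.length) := conj_word_mem' V hIH
      have harith : R'.length - 1 + V.length = m - 1 := by omega
      rw [harith] at hconj
      have hmid : dd (pw (V ++ R')) ∈ Mj (S := S) (m - 1) := by
        rw [hsplit]
        exact mul_mem (dd_mem_Mj (by omega)) hconj
      have m1 : dd (evA a) ∈ Mj (S := S) (m - 1) := by
        have : dd (evA a) = dd (pw [a]) := by rw [pw_singleton]
        rw [this]; exact dd_mem_Mj (by simp; omega)
      exact mul_mem (mul_mem m1 hmid) m1

/-- Pigeonhole: a long word has a repeated base letter. -/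
lemma exists_decomp (w : List (Letter S)) (hlen : S.card + 1 ≤ w.length) :
    ∃ (U V W : List (Letter S)) (a b : Letter S),
      a.1 = b.1 ∧ w = U ++ a :: (V ++ b :: W) := by
  have hnodup : ¬ (w.map (fun a => a.1)).Nodup := by
    intro h
    have h2 := h.length_le_card
    rw [List.length_map, Fintype.card_coe] at h2
    omega
  clear hlen
  induction w with
  | nil => simp at hnodup
  | cons a w ih =>
      by_cases hmem : a.1 ∈ w.map (fun c => c.1)
      · obtain ⟨b, hb, hb1⟩ := List.mem_map.mp hmem
        obtain ⟨V, W, rfl⟩ := List.append_of_mem hb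
        exact ⟨[], V, W, a, b, hb1.symm, by simp⟩
      · have hnd : ¬ (w.map (fun c => c.1)).Nodup := by
          intro h
          exact hnodup (by rw [List.map_cons, List.nodup_cons]; exact ⟨hmem, h⟩)
        obtain ⟨U, V, W, c, e, h1, h2⟩ := ih hnd
        exact ⟨a :: U, V, W, c, e, h1, by rw [h2]; simp⟩

/-- Every `d(πw)` lies in the subgroup generated by `d`'s of words of bounded length. -/
lemma dd_pw_mem_H : ∀ (m : ℕ) (w : List (Letter S)), w.length ≤ m →
    dd (pw w) ∈ Mj (S := S) (S.card + 1) := by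
  intro m
  induction m using Nat.strong_induction_on with
  | _ m IH =>
  intro w hw
  by_cases hsmall : w.length ≤ S.card + 1
  · exact dd_mem_Mj hsmall
  · push_neg at hsmall
    obtain ⟨U, V, W, a, b, hab, rfl⟩ := exists_decomp w (by omega)
    have h1 := lemR (S := S) (U ++ a :: (V ++ b :: W)).length U V W a b hab rfl
    have hm : 1 ≤ m := by omega
    have hle : Mj (S := S) ((U ++ a :: (V ++ b :: W)).length - 1)
        ≤ Mj (S := S) (S.card + 1) := by
      rw [Mj]
      refine (Subgroup.closure_le _).mpr ?_
      rintro x ⟨v, hv, rfl⟩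
      exact IH (m - 1) (by omega) v (by omega)
    exact hle h1

/-- Every element of `G` is represented by a word. -/
lemma exists_word (hS : Subgroup.closure (↑S : Set G) = ⊤) (g : G) :
    ∃ w : List (Letter S), pw w = g := by
  have hg : g ∈ Subgroup.closure (↑S : Set G) := by rw [hS]; trivial
  induction hg using Subgroup.closure_induction with
  | mem x hx => exact ⟨[(⟨x, hx⟩, true)], by simp [pw_singleton, evA]⟩
  | one => exact ⟨[], rfl⟩
  | mul x y hx hy ihx ihy =>
      obtain ⟨u, hu⟩ := ihx
      obtain ⟨v, hv⟩ := ihy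
      exact ⟨u ++ v, by rw [pw_append, hu, hv]⟩
  | inv x hx ihx =>
      obtain ⟨u, hu⟩ := ihx
      exact ⟨wInv u, by rw [pw_wInv, hu]⟩

end Words

/-- The subgroup generated by all `d(g)`. -/
def Dgrp (G : Type*) [Group G] : Subgroup (SidkiX G) :=
  Subgroup.closure (Set.range (dd : G → SidkiX G))

lemma conj_il_D (c : G) {x : SidkiX G} (hx : x ∈ Dgrp G) :
    (il c)⁻¹ * x * il c ∈ Dgrp G := by
  induction hx using Subgroup.closure_induction with
  | mem y hy =>
      obtain ⟨g, rfl⟩ := hy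
      rw [conj_il_dd]
      exact mul_mem (Subgroup.subset_closure ⟨g * c, rfl⟩)
        (inv_mem (Subgroup.subset_closure ⟨c, rfl⟩))
  | one =>
      have : (il c)⁻¹ * 1 * il c = 1 := by group
      rw [this]; exact one_mem _
  | mul y z hy hz ihy ihz =>
      have : (il c)⁻¹ * (y * z) * il c
          = ((il c)⁻¹ * y * il c) * ((il c)⁻¹ * z * il c) := by group
      rw [this]; exact mul_mem ihy ihz
  | inv y hy ihy =>
      have : (il c)⁻¹ * y⁻¹ * il c = ((il c)⁻¹ * y * il c)⁻¹ := by group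
      rw [this]; exact inv_mem ihy

lemma key_retract : ∀ y : Coprod G G,
    (il (SidkiX.proj G (SidkiX.mk G y)))⁻¹ * SidkiX.mk G y ∈ Dgrp G := by
  intro y
  induction y using Coprod.induction_on with
  | inl g =>
      have e : SidkiX.mk G (Coprod.inl g) = il g := rfl
      rw [e, proj_il]
      have : (il g)⁻¹ * il g = 1 := by group
      rw [this]; exact one_mem _
  | inr g =>
      have e : SidkiX.mk G (Coprod.inr g) = ir g := rfl
      rw [e, proj_ir]
      exact Subgroup.subset_closure ⟨g, rfl⟩
  | mul y z ihy ihz =>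
      rw [map_mul]
      have e : (il (SidkiX.proj G (SidkiX.mk G y * SidkiX.mk G z)))⁻¹
            * (SidkiX.mk G y * SidkiX.mk G z)
          = ((il (SidkiX.proj G (SidkiX.mk G z)))⁻¹
              * ((il (SidkiX.proj G (SidkiX.mk G y)))⁻¹ * SidkiX.mk G y)
              * il (SidkiX.proj G (SidkiX.mk G z)))
            * ((il (SidkiX.proj G (SidkiX.mk G z)))⁻¹ * SidkiX.mk G z) := by
        rw [map_mul, map_mul]
        group
      rw [e]
      exact mul_mem (conj_il_D _ ihy) ihz

lemma L_le_D : SidkiL G ≤ Dgrp G := by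
  intro x hx
  obtain ⟨y, rfl⟩ := QuotientGroup.mk'_surjective (Subgroup.normalClosure (weakCommRel G)) x
  have hx' : SidkiX.proj G (SidkiX.mk G y) = 1 := hx
  have := key_retract (G := G) y
  rw [hx', map_one] at this
  rw [inv_one, one_mul] at this; exact this

end SidkiAux

/-- **Proposition 2.4.** If `G` is finitely generated then `L(G)` is finitely generated. -/
theorem sidkiL_fg (G : Type*) [Group G] (hG : Group.FG G) : (SidkiL G).FG := by
  obtain ⟨Sf, hSf⟩ := hG.out
  rw [Subgroup.fg_iff]
  refine ⟨{x | ∃ w : List (SidkiAux.Letter Sf), w.length ≤ Sf.card + 1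
      ∧ x = SidkiAux.dd (SidkiAux.pw w)}, ?_, ?_⟩
  · have hMj : Subgroup.closure {x | ∃ w : List (SidkiAux.Letter Sf),
        w.length ≤ Sf.card + 1 ∧ x = SidkiAux.dd (SidkiAux.pw w)}
        = SidkiAux.Mj (S := Sf) (Sf.card + 1) := rfl
    rw [hMj]
    apply le_antisymm
    · rw [SidkiAux.Mj]
      refine (Subgroup.closure_le _).mpr ?_
      rintro x ⟨w, hw, rfl⟩
      exact SidkiAux.dd_mem_L _
    · intro x hx
      have hxD := SidkiAux.L_le_D hx
      refine (Subgroup.closure_le _).mpr ?_ hxD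
      rintro y ⟨g, rfl⟩
      obtain ⟨w, rfl⟩ := SidkiAux.exists_word hSf g
      exact SidkiAux.dd_pw_mem_H w.length w le_rfl
  · have hsub : {x | ∃ w : List (SidkiAux.Letter Sf), w.length ≤ Sf.card + 1
        ∧ x = SidkiAux.dd (SidkiAux.pw w)}
        ⊆ (fun w => SidkiAux.dd (SidkiAux.pw w)) ''
          {w : List (SidkiAux.Letter Sf) | w.length ≤ Sf.card + 1} := by
      rintro x ⟨w, h1, rfl⟩
      exact ⟨w, h1, rfl⟩
    exact ((List.finite_length_le _ _).image _).subset hsub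
end

section
/- Let G be a group generated by two elements a and b, and let P be the subgroup of G × G generated by the set {(g, g⁻¹) : g ∈ G}. Then P is generated by the three elements (a, a⁻¹), (b, b⁻¹) and (ab, (ab)⁻¹). -/
open scoped commutatorElement

/-- **Lemma 2.6.** If `G` is generated by `{a, b}`, then the subgroup
`P = ⟨(g, g⁻¹) : g ∈ G⟩` of `G × G` is generated by `(a, a⁻¹)`, `(b, b⁻¹)` and
`(ab, (ab)⁻¹)`. -/
theorem fiber_product_three_generators {G : Type*} [Group G] (a b : G)
    (hab : Subgroup.closure {a, b} = ⊤) :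
    Subgroup.closure {p : G × G | ∃ g : G, p = (g, g⁻¹)} =
      Subgroup.closure {(a, a⁻¹), (b, b⁻¹), (a * b, (a * b)⁻¹)} := by
  set H := Subgroup.closure {((a : G), a⁻¹), (b, b⁻¹), (a * b, (a * b)⁻¹)} with hH
  have ha : ((a : G), a⁻¹) ∈ H := Subgroup.subset_closure (by simp)
  have hb : ((b : G), b⁻¹) ∈ H := Subgroup.subset_closure (by simp)
  have hab' : (a * b, (a * b)⁻¹) ∈ H := Subgroup.subset_closure (by simp)
  have hmem : ∀ g : G, g ∈ Subgroup.closure ({a, b} : Set G) := fun g => hab ▸ Subgroup.mem_top g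
  set C : Subgroup G := H.comap (MonoidHom.inr G G) with hC
  have hCmem : ∀ c : G, c ∈ C ↔ ((1 : G), c) ∈ H := fun c => Iff.rfl
  have hsnd : ∀ g : G, ∃ x : G, (x, g) ∈ H := by
    intro g
    have hg : g ∈ H.map (MonoidHom.snd G G) := by
      have hle : Subgroup.closure ({a, b} : Set G) ≤ H.map (MonoidHom.snd G G) := by
        refine (Subgroup.closure_le _).2 ?_
        rintro x (rfl | rfl)
        · exact ⟨(x, x⁻¹)⁻¹, inv_mem ha, by simp⟩
        · exact ⟨(x, x⁻¹)⁻¹, inv_mem hb, by simp⟩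
      exact hle (hmem g)
    obtain ⟨p, hp, hp2⟩ := hg
    refine ⟨p.1, ?_⟩
    rwa [show (p.1, g) = p from Prod.ext rfl hp2.symm]
  haveI hCn : C.Normal := by
    constructor
    intro c hc g
    obtain ⟨x, hx⟩ := hsnd g
    have h1 : (x, g) * (1, c) * (x, g)⁻¹ ∈ H := mul_mem (mul_mem hx ((hCmem c).1 hc)) (inv_mem hx)
    have he : ((x : G), g) * (1, c) * (x, g)⁻¹ = ((1 : G), g * c * g⁻¹) := by
      ext <;> simp
    rw [he] at h1
    exact (hCmem _).2 h1
  have hba : ⁅b, a⁆ ∈ C := by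
    have h1 : ((a, a⁻¹) * (b, b⁻¹))⁻¹ * (a * b, (a * b)⁻¹) ∈ H :=
      mul_mem (inv_mem (mul_mem ha hb)) hab'
    have he : (((a : G), a⁻¹) * (b, b⁻¹))⁻¹ * (a * b, (a * b)⁻¹) = ((1 : G), ⁅b, a⁆) := by
      ext <;> simp [commutatorElement_def, mul_inv_rev] <;> group
    rw [he] at h1
    exact (hCmem _).2 h1
  have hiff : ∀ g h : G, Commute ((g : G ⧸ C)) (h : G ⧸ C) ↔ ⁅g, h⁆ ∈ C := by
    intro g h
    rw [← commutatorElement_eq_one_iff_commute]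
    rw [show (⁅(g : G ⧸ C), (h : G ⧸ C)⁆) = ((⁅g, h⁆ : G) : G ⧸ C) from
      (map_commutatorElement (QuotientGroup.mk' C) g h).symm]
    exact QuotientGroup.eq_one_iff _
  have key : ∀ g h : G, Commute ((g : G ⧸ C)) (h : G ⧸ C) := by
    have base : ∀ g ∈ ({a, b} : Set G), ∀ h ∈ ({a, b} : Set G),
        Commute ((g : G ⧸ C)) (h : G ⧸ C) := by
      rintro g (rfl | rfl) h (rfl | rfl)
      · exact Commute.refl _
      · exact ((hiff h g).2 hba).symm
      · exact (hiff g h).2 hba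
      · exact Commute.refl _
    intro g
    refine Subgroup.closure_induction
      (p := fun (g : G) _ => ∀ h : G, Commute ((g : G ⧸ C)) (h : G ⧸ C)) ?_ ?_ ?_ ?_ (hmem g)
    · intro x hx h
      refine Subgroup.closure_induction
        (p := fun (h : G) _ => Commute ((x : G ⧸ C)) (h : G ⧸ C)) ?_ ?_ ?_ ?_ (hmem h)
      · intro y hy; exact base x hx y hy
      · simpa using Commute.one_right ((x : G ⧸ C))
      · intro y z _ _ hy hz
        have := hy.mul_right hz
        simpa using this
      · intro y _ hy
        have := hy.inv_right
        simpa using this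
    · intro h; simpa using Commute.one_left ((h : G ⧸ C))
    · intro x y _ _ hx hy h
      have := (hx h).mul_left (hy h)
      simpa using this
    · intro x _ hx h
      have := (hx h).inv_left
      simpa using this
  have hcomm : ∀ g h : G, ⁅g, h⁆ ∈ C := fun g h => (hiff g h).1 (key g h)
  have main : ∀ g : G, (g, g⁻¹) ∈ H := by
    intro g
    refine Subgroup.closure_induction (p := fun (g : G) _ => ((g : G), g⁻¹) ∈ H) ?_ ?_ ?_ ?_ (hmem g)
    · rintro x (rfl | rfl)
      exacts [ha, hb]
    · rw [inv_one]; exact one_mem H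
    · intro x y _ _ hx hy
      have h1 : (x, x⁻¹) * (y, y⁻¹) * (1, ⁅y, x⁆) ∈ H :=
        mul_mem (mul_mem hx hy) ((hCmem _).1 (hcomm y x))
      have he : ((x : G), x⁻¹) * (y, y⁻¹) * ((1 : G), ⁅y, x⁆) = (x * y, (x * y)⁻¹) := by
        ext <;> simp [commutatorElement_def, mul_inv_rev] <;> group
      rwa [he] at h1
    · intro x _ hx
      have := inv_mem hx
      simpa using this
  refine le_antisymm ?_ ?_
  · refine (Subgroup.closure_le _).2 ?_
    rintro p ⟨g, rfl⟩
    exact main g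
  · refine (Subgroup.closure_le _).2 ?_
    rintro p (rfl | rfl | rfl) <;> exact Subgroup.subset_closure ⟨_, rfl⟩
end

section
/- Let F be the free group with basis {a, b}. Then the subgroup L(F) of 𝔛(F) is generated by the three elements a ā⁻¹, b b̄⁻¹ and ab (āb̄)⁻¹ (the images in 𝔛(F) of these words in the free product). -/
open Monoid

namespace SidkiAux

variable {G : Type*} [Group G]

/-- image of `g` -/
def A (G : Type*) [Group G] : G →* SidkiX G := (SidkiX.mk G).comp Coprod.inl

/-- image of `ḡ` -/
def B (G : Type*) [Group G] : G →* SidkiX G := (SidkiX.mk G).comp Coprod.inr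

/-- `d g = g ḡ⁻¹` -/
def d (g : G) : SidkiX G := A G g * (B G g)⁻¹

lemma comm (g : G) : Commute (A G g) (B G g) := by
  have h : SidkiX.mk G ((Coprod.inl g)⁻¹ * (Coprod.inr g)⁻¹ * Coprod.inl g * Coprod.inr g)
      = 1 := by
    exact (QuotientGroup.eq_one_iff _).mpr (Subgroup.subset_normalClosure ⟨g, rfl⟩)
  simp only [map_mul, map_inv] at h
  have h2 : B G g * A G g * ((SidkiX.mk G (Coprod.inl g))⁻¹ * (SidkiX.mk G (Coprod.inr g))⁻¹ *
      SidkiX.mk G (Coprod.inl g) * SidkiX.mk G (Coprod.inr g)) = B G g * A G g * 1 := by rw [h]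
  have hA : A G g = SidkiX.mk G (Coprod.inl g) := rfl
  have hB : B G g = SidkiX.mk G (Coprod.inr g) := rfl
  rw [← hA, ← hB, mul_one] at h2
  show A G g * B G g = B G g * A G g
  calc A G g * B G g = B G g * A G g * ((A G g)⁻¹ * (B G g)⁻¹ * A G g * B G g) := by group
  _ = B G g * A G g := by rw [h2]

lemma d_one : d (1 : G) = 1 := by simp [d]

lemma d_inv (g : G) : d (g⁻¹ : G) = (d g)⁻¹ := by
  have := ((comm g).inv_left).eq
  simp only [d, map_inv, mul_inv_rev, inv_inv]
  exact this

/-- key identity `d (t u t) = d t * d u * d t`. -/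
lemma d_conj (t u : G) : d (t * u * t) = d t * d u * d t := by
  have c2 : Commute (A G u) ((B G u)⁻¹) := (comm u).inv_right
  have c3' := comm (u * t)
  simp only [map_mul] at c3'
  have c3 : Commute (A G u * A G t) ((B G u * B G t)⁻¹) := c3'.inv_right
  calc d (t * u * t)
      = A G t * ((A G u * A G t) * (B G u * B G t)⁻¹) * (B G t)⁻¹ := by
        simp only [d, map_mul]; group
    _ = A G t * ((B G u * B G t)⁻¹ * (A G u * A G t)) * (B G t)⁻¹ := by rw [c3.eq]
    _ = A G t * (B G t)⁻¹ * ((B G u)⁻¹ * A G u) * (A G t * (B G t)⁻¹) := by group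
    _ = A G t * (B G t)⁻¹ * (A G u * (B G u)⁻¹) * (A G t * (B G t)⁻¹) := by rw [← c2.eq]
    _ = d t * d u * d t := by simp only [d]

/-- conjugation formula (purely definitional). -/
lemma conj_d (t g : G) : A G t * d g * (A G t)⁻¹ = d (t * g) * (d t)⁻¹ := by
  simp only [d, map_mul]; group

lemma B_eq (t : G) : B G t = (d t)⁻¹ * A G t := by simp only [d]; group

end SidkiAux

namespace SidkiAux

variable {G : Type*} [Group G]

section Memberships

variable (a b : G)

/-- the subgroup generated by the three elements -/
def Hgrp : Subgroup (SidkiX G) := Subgroup.closure {d a, d b, d (a * b)}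

variable {a b}

lemma ha : d a ∈ Hgrp a b := Subgroup.subset_closure (by simp)
lemma hb : d b ∈ Hgrp a b := Subgroup.subset_closure (by simp)
lemma hab : d (a * b) ∈ Hgrp a b := Subgroup.subset_closure (by simp)

lemma hm {t u : G} (ht : d t ∈ Hgrp a b) (hu : d u ∈ Hgrp a b) :
    d (t * u * t) ∈ Hgrp a b := by
  rw [d_conj]; exact mul_mem (mul_mem ht hu) ht

lemma hinv {t : G} (ht : d t ∈ Hgrp a b) : d t⁻¹ ∈ Hgrp a b := by
  rw [d_inv]; exact inv_mem ht

/-- membership via rewriting the group element -/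
lemma hrw {t u : G} (h : t = u) (ht : d t ∈ Hgrp a b) : d u ∈ Hgrp a b := h ▸ ht

lemma h1 : d (a * b⁻¹) ∈ Hgrp a b :=
  hrw (show a * (a * b)⁻¹ * a = a * b⁻¹ by group) (hm ha (hinv hab))

lemma h2 : d (b * a) ∈ Hgrp a b :=
  hrw (show b * (a * b⁻¹) * b = b * a by group) (hm hb h1)

lemma h3 : d (a⁻¹ * b) ∈ Hgrp a b :=
  hrw (show a⁻¹ * (b * a) * a⁻¹ = a⁻¹ * b by group) (hm (hinv ha) h2)

lemma h4 : d (b⁻¹ * a) ∈ Hgrp a b :=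
  hrw (show b⁻¹ * (a * b) * b⁻¹ = b⁻¹ * a by group) (hm (hinv hb) hab)

lemma h5 : d (a⁻¹ * b⁻¹ * a⁻¹) ∈ Hgrp a b := hm (hinv ha) (hinv hb)

lemma h6 : d (a * b * a⁻¹) ∈ Hgrp a b :=
  hrw (show (a * b) * (a⁻¹ * b⁻¹ * a⁻¹) * (a * b) = a * b * a⁻¹ by group) (hm hab h5)

lemma h7 : d (a * (a * b)) ∈ Hgrp a b :=
  hrw (show a * (a * b * a⁻¹) * a = a * (a * b) by group) (hm ha h6)

lemma h8 : d (a * b * b) ∈ Hgrp a b :=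
  hrw (show (a * b) * a⁻¹ * (a * b) = a * b * b by group) (hm hab (hinv ha))

lemma h9 : d (b⁻¹ * (a * b)) ∈ Hgrp a b :=
  hrw (show b⁻¹ * (a * b * b) * b⁻¹ = b⁻¹ * (a * b) by group) (hm (hinv hb) h8)

lemma h10 : d (b * a * b) ∈ Hgrp a b := hm hb ha

lemma h11 : d (a * a) ∈ Hgrp a b :=
  hrw (show a * 1 * a = a * a by group) (hm ha (by rw [d_one]; exact one_mem _))

lemma h12 : d (b * b) ∈ Hgrp a b :=
  hrw (show b * 1 * b = b * b by group) (hm hb (by rw [d_one]; exact one_mem _))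

/-- conjugate of `d g` by `A t` expressed via `d`s, membership form -/
lemma conj_mem {t g : G} (h1 : d (t * g) ∈ Hgrp a b) (h2 : d t ∈ Hgrp a b) :
    A G t * d g * (A G t)⁻¹ ∈ Hgrp a b := by
  rw [conj_d]; exact mul_mem h1 (inv_mem h2)

lemma norm_helper {X : Type*} [Group X] {S : Set X} {x : X}
    (h1 : ∀ s ∈ S, x * s * x⁻¹ ∈ Subgroup.closure S)
    (h2 : ∀ s ∈ S, x⁻¹ * s * x ∈ Subgroup.closure S) :
    x ∈ Subgroup.normalizer (Subgroup.closure S : Set X) := by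
  have key : ∀ (y : X), (∀ s ∈ S, y * s * y⁻¹ ∈ Subgroup.closure S) →
      ∀ h ∈ Subgroup.closure S, y * h * y⁻¹ ∈ Subgroup.closure S := by
    intro y hy h hh
    induction hh using Subgroup.closure_induction with
    | mem z hz => exact hy z hz
    | one => simpa using one_mem _
    | mul z w hz hw hz' hw' =>
        have : y * (z * w) * y⁻¹ = (y * z * y⁻¹) * (y * w * y⁻¹) := by group
        rw [this]; exact mul_mem hz' hw'
    | inv z hz hz' =>
        have : y * z⁻¹ * y⁻¹ = (y * z * y⁻¹)⁻¹ := by group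
        rw [this]; exact inv_mem hz'
  rw [Subgroup.mem_normalizer_iff]
  intro h
  constructor
  · exact fun hh => key x h1 h hh
  · intro hh
    have := key x⁻¹ (by simpa using h2) _ hh
    simpa [mul_assoc] using this

lemma Aa_mem_normalizer : A G a ∈ Subgroup.normalizer (Hgrp a b : Set (SidkiX G)) := by
  apply norm_helper
  · rintro s hs
    rcases hs with rfl | rfl | rfl
    · exact conj_mem h11 ha
    · exact conj_mem hab ha
    · exact conj_mem h7 ha
  · rintro s hs
    have hAi : (A G a)⁻¹ = A G a⁻¹ := by rw [map_inv]
    rcases hs with rfl | rfl | rfl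
    · rw [hAi, show A G a = (A G a⁻¹)⁻¹ by rw [map_inv, inv_inv]]
      exact conj_mem (hrw (show (1:G) = a⁻¹ * a by group) (by rw [d_one]; exact one_mem _))
        (hinv ha)
    · rw [hAi, show A G a = (A G a⁻¹)⁻¹ by rw [map_inv, inv_inv]]
      exact conj_mem h3 (hinv ha)
    · rw [hAi, show A G a = (A G a⁻¹)⁻¹ by rw [map_inv, inv_inv]]
      exact conj_mem (hrw (show b = a⁻¹ * (a * b) by group) hb) (hinv ha)

lemma Ab_mem_normalizer : A G b ∈ Subgroup.normalizer (Hgrp a b : Set (SidkiX G)) := by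
  apply norm_helper
  · rintro s hs
    rcases hs with rfl | rfl | rfl
    · exact conj_mem h2 hb
    · exact conj_mem h12 hb
    · exact conj_mem (hrw (show b * a * b = b * (a * b) by group) h10) hb
  · rintro s hs
    have hAi : (A G b)⁻¹ = A G b⁻¹ := by rw [map_inv]
    rcases hs with rfl | rfl | rfl
    · rw [hAi, show A G b = (A G b⁻¹)⁻¹ by rw [map_inv, inv_inv]]
      exact conj_mem h4 (hinv hb)
    · rw [hAi, show A G b = (A G b⁻¹)⁻¹ by rw [map_inv, inv_inv]]
      exact conj_mem (hrw (show (1:G) = b⁻¹ * b by group) (by rw [d_one]; exact one_mem _))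
        (hinv hb)
    · rw [hAi, show A G b = (A G b⁻¹)⁻¹ by rw [map_inv, inv_inv]]
      exact conj_mem h9 (hinv hb)

end Memberships

end SidkiAux

namespace SidkiAux

section Free

abbrev F2 := FreeGroup (Fin 2)

local notation "aa" => FreeGroup.of (0 : Fin 2)
local notation "bb" => FreeGroup.of (1 : Fin 2)

lemma mk_surj : Function.Surjective (SidkiX.mk F2) :=
  QuotientGroup.mk'_surjective _

lemma A_mem_normalizer (t : F2) : A F2 t ∈ Subgroup.normalizer (Hgrp aa bb : Set (SidkiX F2)) := by
  have : (⊤ : Subgroup F2) ≤ (Subgroup.normalizer (Hgrp aa bb : Set (SidkiX F2))).comap (A F2) := by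
    rw [← FreeGroup.closure_range_of (Fin 2), Subgroup.closure_le]
    rintro x ⟨i, rfl⟩
    fin_cases i
    · exact Aa_mem_normalizer
    · exact Ab_mem_normalizer
  exact this (Subgroup.mem_top t)

lemma B_mem_normalizer (t : F2) : B F2 t ∈ Subgroup.normalizer (Hgrp aa bb : Set (SidkiX F2)) := by
  have hle := Subgroup.le_normalizer (H := Hgrp aa bb)
  have h0 : B F2 aa ∈ Subgroup.normalizer (Hgrp aa bb : Set (SidkiX F2)) := by
    rw [B_eq]; exact mul_mem (hle (inv_mem ha)) Aa_mem_normalizer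
  have h1 : B F2 bb ∈ Subgroup.normalizer (Hgrp aa bb : Set (SidkiX F2)) := by
    rw [B_eq]; exact mul_mem (hle (inv_mem hb)) Ab_mem_normalizer
  have : (⊤ : Subgroup F2) ≤ (Subgroup.normalizer (Hgrp aa bb : Set (SidkiX F2))).comap (B F2) := by
    rw [← FreeGroup.closure_range_of (Fin 2), Subgroup.closure_le]
    rintro x ⟨i, rfl⟩
    fin_cases i
    · exact h0
    · exact h1
  exact this (Subgroup.mem_top t)

lemma mem_normalizer (x : SidkiX F2) : x ∈ Subgroup.normalizer (Hgrp aa bb : Set (SidkiX F2)) := by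
  obtain ⟨c, rfl⟩ := mk_surj x
  induction c using Coprod.induction_on with
  | inl t => exact A_mem_normalizer t
  | inr t => exact B_mem_normalizer t
  | mul x y hx hy => rw [map_mul]; exact mul_mem hx hy

lemma Hgrp_normal : (Hgrp aa bb).Normal := by
  rw [← Subgroup.normalizer_eq_top_iff, eq_top_iff]
  exact fun x _ => mem_normalizer x

lemma d_mem (g : F2) : d g ∈ Hgrp aa bb := by
  haveI hN := Hgrp_normal
  have key : (QuotientGroup.mk' (Hgrp aa bb)).comp (A F2)
      = (QuotientGroup.mk' (Hgrp aa bb)).comp (B F2) := by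
    apply FreeGroup.ext_hom
    intro i
    have main : ∀ t : F2, d t ∈ Hgrp aa bb →
        QuotientGroup.mk' (Hgrp aa bb) (A F2 t) = QuotientGroup.mk' (Hgrp aa bb) (B F2 t) := by
      intro t ht
      rw [QuotientGroup.mk'_eq_mk']
      refine ⟨(A F2 t)⁻¹ * (d t)⁻¹ * A F2 t, ?_, ?_⟩
      · simpa using hN.conj_mem _ (inv_mem ht) (A F2 t)⁻¹
      · rw [B_eq]; group
    simp only [MonoidHom.comp_apply]
    fin_cases i
    · exact main aa ha
    · exact main bb hb
  have hg : QuotientGroup.mk' (Hgrp aa bb) (A F2 g) = QuotientGroup.mk' (Hgrp aa bb) (B F2 g) :=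
    DFunLike.congr_fun key g
  rw [QuotientGroup.mk'_eq_mk'] at hg
  obtain ⟨z, hz, hzeq⟩ := hg
  have : d g = A F2 g * z⁻¹ * (A F2 g)⁻¹ := by
    show A F2 g * (B F2 g)⁻¹ = _
    rw [← hzeq]; group
  rw [this]
  exact hN.conj_mem _ (inv_mem hz) _

lemma projA (t : F2) : SidkiX.proj F2 (A F2 t) = t := by
  show SidkiX.proj F2 (SidkiX.mk F2 (Coprod.inl t)) = t
  show (Coprod.lift (MonoidHom.id F2) (MonoidHom.id F2)) (Coprod.inl t) = t
  simp

lemma projB (t : F2) : SidkiX.proj F2 (B F2 t) = t := by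
  show SidkiX.proj F2 (SidkiX.mk F2 (Coprod.inr t)) = t
  show (Coprod.lift (MonoidHom.id F2) (MonoidHom.id F2)) (Coprod.inr t) = t
  simp

/-- the key subgroup `T`. -/
def Tgrp : Subgroup (SidkiX F2) where
  carrier := {x | x * (A F2 (SidkiX.proj F2 x))⁻¹ ∈ Hgrp aa bb}
  one_mem' := by
    simp only [Set.mem_setOf_eq, map_one, inv_one, mul_one]
    exact one_mem _
  mul_mem' := by
    intro x y hx hy
    simp only [Set.mem_setOf_eq] at hx hy ⊢
    have : x * y * (A F2 (SidkiX.proj F2 (x * y)))⁻¹ =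
        (x * (y * (A F2 (SidkiX.proj F2 y))⁻¹) * x⁻¹) * (x * (A F2 (SidkiX.proj F2 x))⁻¹) := by
      rw [map_mul, map_mul]; group
    rw [this]
    exact mul_mem (Hgrp_normal.conj_mem _ hy x) hx
  inv_mem' := by
    intro x hx
    simp only [Set.mem_setOf_eq] at hx ⊢
    have : x⁻¹ * (A F2 (SidkiX.proj F2 x⁻¹))⁻¹ =
        x⁻¹ * ((x * (A F2 (SidkiX.proj F2 x))⁻¹)⁻¹) * x⁻¹⁻¹ := by
      rw [map_inv, map_inv]; group
    rw [this]
    exact Hgrp_normal.conj_mem _ (inv_mem hx) x⁻¹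

lemma mem_Tgrp_iff (x : SidkiX F2) :
    x ∈ Tgrp ↔ x * (A F2 (SidkiX.proj F2 x))⁻¹ ∈ Hgrp aa bb := Iff.rfl

lemma mem_Tgrp (x : SidkiX F2) : x ∈ Tgrp := by
  obtain ⟨c, rfl⟩ := mk_surj x
  induction c using Coprod.induction_on with
  | inl t =>
      rw [mem_Tgrp_iff]
      have h1 : SidkiX.mk F2 (Coprod.inl t) = A F2 t := rfl
      rw [h1, projA, mul_inv_cancel]
      exact one_mem _
  | inr t =>
      rw [mem_Tgrp_iff]
      have h1 : SidkiX.mk F2 (Coprod.inr t) = B F2 t := rfl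
      rw [h1, projB]
      have h2 : B F2 t * (A F2 t)⁻¹ = (d t)⁻¹ := by rw [B_eq]; group
      rw [h2]
      exact inv_mem (d_mem t)
  | mul x y hx hy => rw [map_mul]; exact mul_mem hx hy

lemma SidkiL_le : SidkiL F2 ≤ Hgrp aa bb := by
  intro x hx
  have hT := (mem_Tgrp_iff x).mp (mem_Tgrp x)
  have hx1 : SidkiX.proj F2 x = 1 := hx
  rw [hx1, map_one, inv_one, mul_one] at hT
  exact hT

end Free

end SidkiAux


/-- **Proposition 2.7.** If `F` is the free group with basis `{a, b}`, then `L(F)` is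
generated by the three elements `a ā⁻¹`, `b b̄⁻¹` and `ab (āb̄)⁻¹`. -/
theorem sidkiL_freeGroup_two_generators :
    letI F := FreeGroup (Fin 2)
    letI a : F := FreeGroup.of 0
    letI b : F := FreeGroup.of 1
    SidkiL F = Subgroup.closure
      {SidkiX.mk F (Coprod.inl a * (Coprod.inr a)⁻¹),
       SidkiX.mk F (Coprod.inl b * (Coprod.inr b)⁻¹),
       SidkiX.mk F (Coprod.inl (a * b) * (Coprod.inr (a * b))⁻¹)} := by
  have h : ∀ g : FreeGroup (Fin 2),
      SidkiX.mk (FreeGroup (Fin 2)) (Coprod.inl g * (Coprod.inr g)⁻¹) = SidkiAux.d g := by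
    intro g
    rw [map_mul, map_inv]
    rfl
  rw [h, h, h]
  have hker : ∀ g : FreeGroup (Fin 2), SidkiAux.d g ∈ SidkiL (FreeGroup (Fin 2)) := by
    intro g
    show SidkiX.proj (FreeGroup (Fin 2)) (SidkiAux.d g) = 1
    show SidkiX.proj (FreeGroup (Fin 2))
      (SidkiAux.A (FreeGroup (Fin 2)) g * (SidkiAux.B (FreeGroup (Fin 2)) g)⁻¹) = 1
    rw [map_mul, map_inv, SidkiAux.projA, SidkiAux.projB, mul_inv_cancel]
  refine le_antisymm SidkiAux.SidkiL_le (Subgroup.closure_le _ |>.mpr ?_)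
  rintro x (rfl | rfl | rfl) <;> exact hker _
end

section
/- Let F be a free group of finite rank, let R be a normal subgroup of F, and let G = F/R. Then the following are equivalent: (i) there exist a finitely presented group H and a surjective group homomorphism H → G whose kernel is perfect (equal to its own commutator subgroup); (ii) there exist finitely many elements r₁,…,r_m ∈ R such that R is generated by [R,R] together with the normal closure of {r₁,…,r_m} in F. -/
open Subgroup

/-- A group is finitely presented if it is isomorphic to the quotient of a free group of
finite rank by the normal closure of a finite set. -/
def IsFinitelyPresented (G : Type*) [Group G] : Prop :=
  ∃ (n : ℕ) (S : Finset (FreeGroup (Fin n))),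
    Nonempty ((FreeGroup (Fin n) ⧸ Subgroup.normalClosure (S : Set (FreeGroup (Fin n)))) ≃* G)

/-- **Lemma 3.1.** Let `F` be a free group of finite rank, `R ⊴ F` and `G = F/R`. Then `G`
is the quotient of a finitely presented group by a perfect normal subgroup if and only if
there are finitely many elements `r₁, …, r_m ∈ R` such that `R` is generated by `[R, R]`
together with the normal closure of `{r₁, …, r_m}` in `F`  (i.e. `G` has type `FP₂`). -/
theorem FP2_characterization (k : ℕ) (R : Subgroup (FreeGroup (Fin k))) [R.Normal] :
    (∃ (H : Type) (_ : Group H) (f : H →* FreeGroup (Fin k) ⧸ R),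
        IsFinitelyPresented H ∧ Function.Surjective f ∧ ⁅f.ker, f.ker⁆ = f.ker) ↔
      (∃ (m : ℕ) (r : Fin m → FreeGroup (Fin k)), (∀ i, r i ∈ R) ∧
        R = ⁅R, R⁆ ⊔ Subgroup.normalClosure (Set.range r)) := by
  constructor
  · rintro ⟨H, _, f, ⟨n, S, ⟨e⟩⟩, hsurj, hperf⟩
    set N : Subgroup (FreeGroup (Fin n)) :=
      Subgroup.normalClosure (S : Set (FreeGroup (Fin n))) with hNdef
    let q : FreeGroup (Fin n) →* FreeGroup (Fin n) ⧸ N := QuotientGroup.mk' N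
    let ψ : FreeGroup (Fin n) →* FreeGroup (Fin k) ⧸ R := (f.comp e.toMonoidHom).comp q
    have hψsurj : Function.Surjective ψ :=
      hsurj.comp (e.surjective.comp (QuotientGroup.mk'_surjective N))
    let π : FreeGroup (Fin k) →* FreeGroup (Fin k) ⧸ R := QuotientGroup.mk' R
    have hπsurj : Function.Surjective π := QuotientGroup.mk'_surjective R
    set K := ψ.ker with hKdef
    have hkerq : q.ker = N := QuotientGroup.ker_mk' N
    -- perfection of the middle kernel
    have hL : (f.comp e.toMonoidHom).ker
        = Subgroup.map e.symm.toMonoidHom f.ker := by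
      rw [← MonoidHom.comap_ker]
      exact (Subgroup.map_equiv_eq_comap_symm e.symm f.ker).symm
    have hLperf : ⁅(f.comp e.toMonoidHom).ker, (f.comp e.toMonoidHom).ker⁆
        = (f.comp e.toMonoidHom).ker := by
      rw [hL, ← Subgroup.map_commutator, hperf]
    -- K = [K,K] ⊔ N
    have hKcomap : K = Subgroup.comap q (f.comp e.toMonoidHom).ker := by
      rw [hKdef, MonoidHom.comap_ker]
    have hNK : N ≤ K := by
      rw [hKcomap]
      intro x hx
      have : q x = 1 := by rwa [← MonoidHom.mem_ker, hkerq]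
      simp [Subgroup.mem_comap, this]
    have hmapK : Subgroup.map q K = (f.comp e.toMonoidHom).ker := by
      rw [hKcomap, Subgroup.map_comap_eq_self_of_surjective (QuotientGroup.mk'_surjective N)]
    have hcomapmap : Subgroup.comap q (Subgroup.map q K) = K := by
      rw [Subgroup.comap_map_eq, hkerq, sup_eq_left.mpr hNK]
    have hKA : K = ⁅K, K⁆ ⊔ N := by
      have h4 : Subgroup.map q ⁅K, K⁆ = Subgroup.map q K := by
        rw [Subgroup.map_commutator, hmapK, hLperf]
      calc K = Subgroup.comap q (Subgroup.map q K) := hcomapmap.symm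
        _ = Subgroup.comap q (Subgroup.map q ⁅K, K⁆) := by rw [h4]
        _ = ⁅K, K⁆ ⊔ N := by rw [Subgroup.comap_map_eq, hkerq]
    -- lifts
    choose α' hα' using fun i : Fin k => hψsurj (π (FreeGroup.of i))
    let α : FreeGroup (Fin k) →* FreeGroup (Fin n) := FreeGroup.lift α'
    have hψα : ψ.comp α = π :=
      FreeGroup.ext_hom _ _ fun i => by simp [α, hα' i]
    have hψα' : ∀ g, ψ (α g) = π g := fun g => DFunLike.congr_fun hψα g
    choose β' hβ' using fun i : Fin n => hπsurj (ψ (FreeGroup.of i))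
    let β : FreeGroup (Fin n) →* FreeGroup (Fin k) := FreeGroup.lift β'
    have hπβ : π.comp β = ψ :=
      FreeGroup.ext_hom _ _ fun i => by simp [β, hβ' i]
    have hπβ' : ∀ g, π (β g) = ψ g := fun g => DFunLike.congr_fun hπβ g
    have hmemR : ∀ x : FreeGroup (Fin k), x ∈ R ↔ π x = 1 := fun x =>
      (QuotientGroup.eq_one_iff x).symm
    have hβK : ∀ x ∈ K, β x ∈ R := fun x hx => by
      rw [hmemR, hπβ']; exact hx
    -- enumeration of S
    let sEnum : Fin (Fintype.card ↥S) → FreeGroup (Fin n) := fun i => ((Fintype.equivFin ↥S).symm i : FreeGroup (Fin n))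
    have hsrange : Set.range sEnum = (S : Set (FreeGroup (Fin n))) := by
      have : sEnum = (Subtype.val : ↥S → FreeGroup (Fin n)) ∘ (Fintype.equivFin ↥S).symm := rfl
      rw [this, ((Fintype.equivFin ↥S).symm.surjective).range_comp]
      simp
    -- the new relators
    let c : Fin k → FreeGroup (Fin k) := fun i => β (α (FreeGroup.of i)) * (FreeGroup.of i)⁻¹
    let rN : Fin (Fintype.card ↥S + k) → FreeGroup (Fin k) :=
      (Sum.elim (fun i => β (sEnum i)) c) ∘ finSumFinEquiv.symm
    have hrNrange : Set.range rN = Set.range (fun i => β (sEnum i)) ∪ Set.range c := by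
      rw [show rN = (Sum.elim (fun i => β (sEnum i)) c) ∘ finSumFinEquiv.symm from rfl,
        (finSumFinEquiv.symm.surjective).range_comp, Set.Sum.elim_range]
    have hcR : ∀ i, c i ∈ R := fun i => by
      rw [hmemR]
      simp only [c, map_mul, map_inv]
      rw [hπβ', hψα', mul_inv_cancel]
    have hsK : ∀ i, sEnum i ∈ K := fun i => hNK (Subgroup.subset_normalClosure (by
      rw [← hsrange]; exact ⟨i, rfl⟩))
    have hrN : ∀ i, rN i ∈ R := by
      intro i
      show Sum.elim (fun i => β (sEnum i)) c (finSumFinEquiv.symm i) ∈ R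
      rcases finSumFinEquiv.symm i with j | j
      · exact hβK _ (hsK j)
      · exact hcR j
    refine ⟨_, rN, hrN, ?_⟩
    set T := ⁅R, R⁆ ⊔ Subgroup.normalClosure (Set.range rN) with hTdef
    have hTR : T ≤ R := by
      apply sup_le (Subgroup.commutator_le_left R R)
      apply Subgroup.normalClosure_le_normal
      rintro x ⟨i, rfl⟩; exact hrN i
    -- membership of pieces in T
    have hcT : ∀ i, c i ∈ Subgroup.normalClosure (Set.range rN) := fun i =>
      Subgroup.subset_normalClosure (by
        rw [hrNrange]; exact Or.inr ⟨i, rfl⟩)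
    have hβST : ∀ s ∈ (S : Set (FreeGroup (Fin n))), β s ∈ Subgroup.normalClosure (Set.range rN) := by
      intro s hs
      apply Subgroup.subset_normalClosure
      rw [hrNrange]
      rw [← hsrange] at hs
      obtain ⟨j, rfl⟩ := hs
      exact Or.inl ⟨j, rfl⟩
    have hmapβK : Subgroup.map β K ≤ T := by
      rw [hKA, Subgroup.map_sup, Subgroup.map_commutator]
      apply sup_le
      · refine le_trans (Subgroup.commutator_mono ?_ ?_) le_sup_left <;>
        · rintro x ⟨y, hy, rfl⟩; exact hβK y hy
      · refine le_trans ?_ le_sup_right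
        rw [Subgroup.map_le_iff_le_comap]
        haveI : (Subgroup.comap β (Subgroup.normalClosure (Set.range rN))).Normal :=
          Subgroup.Normal.comap inferInstance β
        exact Subgroup.normalClosure_le_normal fun s hs => hβST s hs
    -- the conjugation quotient argument
    set Nc := Subgroup.normalClosure (Set.range c) with hNcdef
    have hNcT : Nc ≤ T := le_trans
      (Subgroup.normalClosure_le_normal fun x hx => by
        obtain ⟨i, rfl⟩ := hx; exact hcT i) le_sup_right
    have key : ∀ x : FreeGroup (Fin k), (β (α x))⁻¹ * x ∈ Nc := by
      have hhom : (QuotientGroup.mk' Nc).comp (β.comp α) = QuotientGroup.mk' Nc :=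
        FreeGroup.ext_hom _ _ fun i => by
          show ((β (α (FreeGroup.of i)) : FreeGroup (Fin k)) : FreeGroup (Fin k) ⧸ Nc)
            = (FreeGroup.of i : FreeGroup (Fin k))
          rw [QuotientGroup.eq]
          have hc : c i ∈ Nc := Subgroup.subset_normalClosure ⟨i, rfl⟩
          have heq : (β (α (FreeGroup.of i)))⁻¹ * FreeGroup.of i
              = (β (α (FreeGroup.of i)))⁻¹ * (c i)⁻¹ * ((β (α (FreeGroup.of i)))⁻¹)⁻¹ := by
            simp only [c]; group
          rw [heq]
          exact Subgroup.Normal.conj_mem inferInstance _ (Nc.inv_mem hc) _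
      intro x
      have := DFunLike.congr_fun hhom x
      exact (QuotientGroup.eq).mp this
    apply le_antisymm _ hTR
    intro g hg
    have hαgK : α g ∈ K := by
      rw [hKdef, MonoidHom.mem_ker, hψα']
      rwa [hmemR] at hg
    have h1 : β (α g) ∈ T := hmapβK ⟨α g, hαgK, rfl⟩
    have h2 : (β (α g))⁻¹ * g ∈ T := hNcT (key g)
    have := T.mul_mem h1 h2
    rwa [mul_inv_cancel_left] at this
  · rintro ⟨m, r, hr, hR⟩
    set N : Subgroup (FreeGroup (Fin k)) := Subgroup.normalClosure (Set.range r) with hNdef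
    have hNR : N ≤ R := Subgroup.normalClosure_le_normal (by
      rintro x ⟨i, rfl⟩; exact hr i)
    have hNker : N ≤ (QuotientGroup.mk' R).ker := by rwa [QuotientGroup.ker_mk']
    let f : (FreeGroup (Fin k) ⧸ N) →* FreeGroup (Fin k) ⧸ R :=
      QuotientGroup.lift N (QuotientGroup.mk' R) hNker
    refine ⟨FreeGroup (Fin k) ⧸ N, inferInstance, f, ?_, ?_, ?_⟩
    · refine ⟨k, Finset.image r Finset.univ, ?_⟩
      have hco : ((Finset.image r Finset.univ : Finset (FreeGroup (Fin k)))
          : Set (FreeGroup (Fin k))) = Set.range r := by simp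
      exact ⟨QuotientGroup.quotientMulEquivOfEq (by rw [hco])⟩
    · intro y
      obtain ⟨x, rfl⟩ := QuotientGroup.mk'_surjective R y
      refine ⟨QuotientGroup.mk x, ?_⟩
      show QuotientGroup.lift N (QuotientGroup.mk' R) hNker (QuotientGroup.mk x) = _
      rw [QuotientGroup.lift_mk']
    · have hker : f.ker = Subgroup.map (QuotientGroup.mk' N) R := by
        ext y
        obtain ⟨x, rfl⟩ := QuotientGroup.mk'_surjective N y
        constructor
        · intro h
          refine ⟨x, ?_, rfl⟩
          have hthis : QuotientGroup.lift N (QuotientGroup.mk' R) hNker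
              (QuotientGroup.mk x) = 1 := h
          rw [QuotientGroup.lift_mk'] at hthis
          exact (QuotientGroup.eq_one_iff x).mp hthis
        · rintro ⟨x', hx', hxx⟩
          have hmem : x ∈ R := by
            have : (x' : FreeGroup (Fin k) ⧸ N) = QuotientGroup.mk x := hxx
            have h2 := (QuotientGroup.eq).mp this
            have := hNR h2
            have := R.mul_mem hx' this
            simpa using this
          show QuotientGroup.lift N (QuotientGroup.mk' R) hNker (QuotientGroup.mk x) = 1
          rw [QuotientGroup.lift_mk']
          exact (QuotientGroup.eq_one_iff x).mpr hmem
      have hmapN : Subgroup.map (QuotientGroup.mk' N) N = ⊥ :=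
        (Subgroup.map_eq_bot_iff N).mpr (le_of_eq (QuotientGroup.ker_mk' N).symm)
      have hstep : Subgroup.map (QuotientGroup.mk' N) R
          = Subgroup.map (QuotientGroup.mk' N) ⁅R, R⁆ := by
        conv_lhs => rw [hR]
        rw [Subgroup.map_sup, hmapN, sup_bot_eq]
      rw [hker]
      conv_rhs => rw [hstep]
      rw [Subgroup.map_commutator]
end
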